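/- arXiv:1902.07665 — 9 statements merged into one kernel-verified Lean document; each statement's English description precedes it below -/
import Mathlib

section
/- Let A be a finite subset of ℝ^d and L ∈ GL(d,ℝ). If |A + L(A)| ≤ c|A| for some positive real c, then |A + A| ≤ c⁶|A|. -/
open Pointwise

/-- If `A ⊆ ℝ^d` is finite nonempty, `L ∈ GL(d, ℝ)` and `|A + L(A)| ≤ c|A|`
for some `c > 0`, then `|A + A| ≤ c⁶|A|`. -/
theorem stmt1 (d : ℕ) (c : ℝ) (hc : 0 < c)
    (L : (Fin d → ℝ) →ₗ[ℝ] (Fin d → ℝ)) (hL : Function.Bijective L)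
    (A : Finset (Fin d → ℝ)) (hA : A.Nonempty)
    (h : ((A + A.image L).card : ℝ) ≤ c * A.card) :
    ((A + A).card : ℝ) ≤ c ^ 6 * A.card := by
  set B := A.image L with hB
  have hinj : Function.Injective L := hL.1
  -- |A + A| = |B + B|
  have himg : (A + A).image L = B + B := by
    rw [hB]
    simpa using Finset.image_add (f := L.toAddMonoidHom) (s := A) (t := A)
  have hcardBB : (A + A).card = (B + B).card := by
    rw [← himg]
    exact (Finset.card_image_of_injective _ hinj).symm
  -- Plünnecke–Ruzsa: |2 • B| ≤ (|A+B|/|A|)^2 * |A| in ℚ≥0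
  have hPR := Finset.pluennecke_ruzsa_inequality_nsmul_add hA B 2
  rw [two_nsmul B] at hPR
  have hPRR : ((B + B).card : ℝ) ≤ (((A + B).card : ℝ) / A.card) ^ 2 * A.card := by
    have h' := (NNRat.cast_le (K := ℝ)).2 hPR
    push_cast at h'
    exact_mod_cast h'
  have hAposR : (0 : ℝ) < A.card := by exact_mod_cast Finset.card_pos.2 hA
  have hAB : (A.card : ℝ) ≤ (A + B).card := by
    exact_mod_cast Finset.card_le_card_add_right (hA.image L)
  have hc1 : (1 : ℝ) ≤ c := by nlinarith
  have hK0 : (0 : ℝ) ≤ ((A + B).card : ℝ) := Nat.cast_nonneg _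
  have hBB : ((B + B).card : ℝ) ≤ c ^ 2 * A.card := by
    calc ((B + B).card : ℝ) ≤ (((A + B).card : ℝ) / A.card) ^ 2 * A.card := hPRR
      _ = ((A + B).card : ℝ) ^ 2 / A.card := by field_simp
      _ ≤ (c * A.card) ^ 2 / A.card := by gcongr
      _ = c ^ 2 * A.card := by field_simp
  have hpow : c ^ 2 ≤ c ^ 6 := pow_le_pow_right₀ hc1 (by norm_num)
  calc ((A + A).card : ℝ) = ((B + B).card : ℝ) := by rw [hcardBB]
    _ ≤ c ^ 2 * A.card := hBB
    _ ≤ c ^ 6 * A.card := by gcongr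
end

section
/- Let A be a finite subset of ℝ^d and L ∈ GL(d,ℝ). If |A + L(A)| ≤ c|A| for some positive real c, then |A − A| ≤ c²|A|. -/
open Pointwise

/-- If `A ⊆ ℝ^d` is finite nonempty, `L ∈ GL(d, ℝ)` and `|A + L(A)| ≤ c|A|`
for some `c > 0`, then `|A − A| ≤ c²|A|`. -/
theorem stmt2 (d : ℕ) (c : ℝ) (hc : 0 < c)
    (L : (Fin d → ℝ) →ₗ[ℝ] (Fin d → ℝ)) (hL : Function.Bijective L)
    (A : Finset (Fin d → ℝ)) (hA : A.Nonempty)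
    (h : ((A + A.image L).card : ℝ) ≤ c * A.card) :
    ((A - A).card : ℝ) ≤ c ^ 2 * A.card := by
  set B := A.image L with hB
  have hcardB : B.card = A.card := Finset.card_image_of_injective _ hL.injective
  have key := Finset.ruzsa_triangle_inequality_sub_add_add A B A
  rw [hcardB] at key
  have hApos : (0 : ℝ) < A.card := by exact_mod_cast Finset.card_pos.2 hA
  have key' : ((A - A).card : ℝ) * A.card ≤ ((A + B).card : ℝ) * (A + B).card := by
    exact_mod_cast key
  have h2 : ((A + B).card : ℝ) * (A + B).card ≤ (c * A.card) * (c * A.card) := by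
    have h0 : (0 : ℝ) ≤ ((A + B).card : ℝ) := Nat.cast_nonneg _
    exact mul_le_mul h h h0 (by positivity)
  nlinarith [key'.trans h2]
end

section
/- For every natural number N ≥ 1 and integers q, s with q, s ≥ 1, the set A_N = {e₁, …, e_d} ∪ {2e₁, …, Ne₁} ⊆ ℤ^d (where e₁,…,e_d is the standard basis) satisfies |q·A_N + s·A_N| ≤ (q + s + 2d − 2)|A_N| + C for some constant C depending only on q, s, d. -/
open Pointwise

/-- For `d ≥ 1` and integers `q, s ≥ 1`, the sets
`A_N = {e₁, …, e_d} ∪ {2e₁, …, Ne₁} ⊆ ℤ^d` satisfy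
`|q·A_N + s·A_N| ≤ (q + s + 2d − 2)|A_N| + C` for a constant `C = C(q,s,d)`. -/
theorem stmt3 (d : ℕ) (hd : 1 ≤ d) (q s : ℤ) (hq : 1 ≤ q) (hs : 1 ≤ s) :
    ∃ C : ℝ, ∀ N : ℕ, 1 ≤ N → ∀ A : Finset (Fin d → ℤ),
      A = (Finset.univ.image fun i : Fin d => (Pi.single i 1 : Fin d → ℤ)) ∪
          ((Finset.Icc 2 N).image fun k : ℕ =>
            ((k : ℤ) • Pi.single (⟨0, hd⟩ : Fin d) 1 : Fin d → ℤ)) →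
      (((A.image fun x => q • x) + (A.image fun x => s • x)).card : ℝ) ≤
        ((q : ℝ) + (s : ℝ) + 2 * d - 2) * A.card + C := by
  refine ⟨(d : ℝ) * d + 2 * d, ?_⟩
  intro N hN A hA
  set i0 : Fin d := ⟨0, hd⟩ with hi0
  set e : Fin d → (Fin d → ℤ) := fun i => Pi.single i 1 with he
  -- classification of elements of A
  have hmem : ∀ a ∈ A, (∃ i : Fin d, i ≠ i0 ∧ a = e i) ∨
      (∃ k : ℤ, 1 ≤ k ∧ k ≤ (N : ℤ) ∧ a = k • e i0) := by
    intro a ha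
    rw [hA, Finset.mem_union] at ha
    rcases ha with h | h
    · simp only [Finset.mem_image, Finset.mem_univ, true_and] at h
      obtain ⟨i, rfl⟩ := h
      by_cases hi : i = i0
      · right
        exact ⟨1, le_refl 1, by exact_mod_cast hN, by rw [hi, one_smul]⟩
      · left; exact ⟨i, hi, rfl⟩
    · right
      simp only [Finset.mem_image, Finset.mem_Icc] at h
      obtain ⟨k, ⟨hk2, hkN⟩, rfl⟩ := h
      exact ⟨(k : ℤ), by exact_mod_cast Nat.one_le_of_lt hk2, by exact_mod_cast hkN, rfl⟩
  set S1 := (Finset.Icc (q + s) ((q + s) * N)).image (fun m : ℤ => m • e i0) with hS1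
  set S2 := ((Finset.Icc (1 : ℤ) (N : ℤ)) ×ˢ (Finset.univ.erase i0)).image
      (fun p : ℤ × Fin d => (q * p.1) • e i0 + s • e p.2) with hS2
  set S3 := ((Finset.univ.erase i0) ×ˢ (Finset.Icc (1 : ℤ) (N : ℤ))).image
      (fun p : Fin d × ℤ => q • e p.1 + (s * p.2) • e i0) with hS3
  set S4 := ((Finset.univ : Finset (Fin d)) ×ˢ (Finset.univ : Finset (Fin d))).image
      (fun p : Fin d × Fin d => q • e p.1 + s • e p.2) with hS4
  have hsub : (A.image fun x => q • x) + (A.image fun x => s • x) ⊆ S1 ∪ S2 ∪ S3 ∪ S4 := by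
    intro x hx
    rw [Finset.mem_add] at hx
    obtain ⟨u, hu, v, hv, rfl⟩ := hx
    rw [Finset.mem_image] at hu hv
    obtain ⟨a, ha, rfl⟩ := hu
    obtain ⟨b, hb, rfl⟩ := hv
    simp only [Finset.mem_union]
    rcases hmem a ha with ⟨i, hi, rfl⟩ | ⟨k, hk1, hkN, rfl⟩ <;>
      rcases hmem b hb with ⟨j, hj, rfl⟩ | ⟨l, hl1, hlN, rfl⟩
    · right
      exact Finset.mem_image.2 ⟨(i, j), by simp, rfl⟩
    · left; right
      refine Finset.mem_image.2 ⟨(i, l), ?_, ?_⟩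
      · simp [Finset.mem_Icc, hi, hl1, hlN]
      · rw [smul_smul]
    · left; left; right
      refine Finset.mem_image.2 ⟨(k, j), ?_, ?_⟩
      · simp [Finset.mem_Icc, hj, hk1, hkN]
      · rw [smul_smul]
    · left; left; left
      refine Finset.mem_image.2 ⟨q * k + s * l, ?_, ?_⟩
      · refine Finset.mem_Icc.2 ⟨?_, ?_⟩ <;> nlinarith
      · rw [smul_smul, smul_smul, add_smul]
  -- cardinality bound on the superset, in ℤ
  have hcard : (((A.image fun x => q • x) + (A.image fun x => s • x)).card : ℤ) ≤
      ((q + s) * N + 1 - (q + s)) + (N : ℤ) * (d - 1) + (d - 1) * N + d * d := by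
    have h1 : (S1.card : ℤ) ≤ (q + s) * N + 1 - (q + s) := by
      have := Finset.card_image_le (s := Finset.Icc (q + s) ((q + s) * N))
        (f := fun m : ℤ => m • e i0)
      rw [Int.card_Icc] at this
      have hle : (S1.card : ℤ) ≤ ((q + s) * N + 1 - (q + s)).toNat := by exact_mod_cast this
      refine hle.trans ?_
      rw [Int.toNat_of_nonneg (by nlinarith)]
    have h2 : (S2.card : ℤ) ≤ (N : ℤ) * (d - 1) := by
      have hh := Finset.card_image_le (s := (Finset.Icc (1 : ℤ) (N : ℤ)) ×ˢ (Finset.univ.erase i0))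
        (f := fun p : ℤ × Fin d => (q * p.1) • e i0 + s • e p.2)
      rw [Finset.card_product, Int.card_Icc, Finset.card_erase_of_mem (Finset.mem_univ _),
        Finset.card_univ, Fintype.card_fin] at hh
      have : (S2.card : ℤ) ≤ (((N : ℤ) + 1 - 1).toNat : ℤ) * ((d : ℤ) - 1) := by
        have hd1 : ((d - 1 : ℕ) : ℤ) = (d : ℤ) - 1 := by
          have : 1 ≤ d := hd; push_cast [this]; ring
        calc (S2.card : ℤ) ≤ ((((N : ℤ) + 1 - 1).toNat * (d - 1) : ℕ) : ℤ) := by exact_mod_cast hh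
          _ = (((N : ℤ) + 1 - 1).toNat : ℤ) * ((d : ℤ) - 1) := by push_cast [hd1]; ring
      simpa using this
    have h3 : (S3.card : ℤ) ≤ ((d : ℤ) - 1) * N := by
      have hh := Finset.card_image_le (s := (Finset.univ.erase i0) ×ˢ (Finset.Icc (1 : ℤ) (N : ℤ)))
        (f := fun p : Fin d × ℤ => q • e p.1 + (s * p.2) • e i0)
      rw [Finset.card_product, Int.card_Icc, Finset.card_erase_of_mem (Finset.mem_univ _),
        Finset.card_univ, Fintype.card_fin] at hh
      have hd1 : ((d - 1 : ℕ) : ℤ) = (d : ℤ) - 1 := by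
        have : 1 ≤ d := hd; push_cast [this]; ring
      calc (S3.card : ℤ) ≤ (((d - 1) * ((N : ℤ) + 1 - 1).toNat : ℕ) : ℤ) := by exact_mod_cast hh
        _ = ((d : ℤ) - 1) * (N : ℤ) := by push_cast [hd1]; simp
    have h4 : (S4.card : ℤ) ≤ (d : ℤ) * d := by
      have hh := Finset.card_image_le
        (s := (Finset.univ : Finset (Fin d)) ×ˢ (Finset.univ : Finset (Fin d)))
        (f := fun p : Fin d × Fin d => q • e p.1 + s • e p.2)
      rw [Finset.card_product, Finset.card_univ, Fintype.card_fin] at hh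
      exact_mod_cast hh
    have hU : ((A.image fun x => q • x) + (A.image fun x => s • x)).card ≤
        S1.card + S2.card + S3.card + S4.card := by
      calc ((A.image fun x => q • x) + (A.image fun x => s • x)).card
          ≤ (S1 ∪ S2 ∪ S3 ∪ S4).card := Finset.card_le_card hsub
        _ ≤ (S1 ∪ S2 ∪ S3).card + S4.card := Finset.card_union_le _ _
        _ ≤ (S1 ∪ S2).card + S3.card + S4.card := by
            have := Finset.card_union_le (S1 ∪ S2) S3; omega
        _ ≤ S1.card + S2.card + S3.card + S4.card := by
            have := Finset.card_union_le S1 S2; omega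
    have hU' : (((A.image fun x => q • x) + (A.image fun x => s • x)).card : ℤ) ≤
        (S1.card : ℤ) + S2.card + S3.card + S4.card := by exact_mod_cast hU
    linarith
  -- lower bound on A.card
  have hAcard : (N : ℤ) - 1 ≤ (A.card : ℤ) := by
    have hsubA : ((Finset.Icc 2 N).image fun k : ℕ => ((k : ℤ) • e i0)) ⊆ A := by
      rw [hA]; exact Finset.subset_union_right
    have hinj : Set.InjOn (fun k : ℕ => ((k : ℤ) • e i0)) (Finset.Icc 2 N) := by
      intro k _ k' _ h
      have := congrFun h i0
      simpa [e, Pi.single_eq_same] using this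
    have hcardimg : ((Finset.Icc 2 N).image fun k : ℕ => ((k : ℤ) • e i0)).card = N - 1 := by
      rw [Finset.card_image_of_injOn hinj, Nat.card_Icc]; omega
    have := Finset.card_le_card hsubA
    rw [hcardimg] at this
    have : ((N - 1 : ℕ) : ℤ) ≤ (A.card : ℤ) := by exact_mod_cast this
    omega
  -- conclude over ℝ
  have hcardR : (((A.image fun x => q • x) + (A.image fun x => s • x)).card : ℝ) ≤
      ((q : ℝ) + s) * N + 1 - ((q : ℝ) + s) + (N : ℝ) * (d - 1) + ((d : ℝ) - 1) * N
        + (d : ℝ) * d := by exact_mod_cast hcard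
  have hAcardR : (N : ℝ) - 1 ≤ (A.card : ℝ) := by exact_mod_cast hAcard
  have hc : (0 : ℝ) ≤ (q : ℝ) + s + 2 * d - 2 := by
    have : (1 : ℝ) ≤ (q : ℝ) := by exact_mod_cast hq
    have : (1 : ℝ) ≤ (s : ℝ) := by exact_mod_cast hs
    have : (1 : ℝ) ≤ (d : ℝ) := by exact_mod_cast hd
    linarith [show (1:ℝ) ≤ (q:ℝ) from by exact_mod_cast hq,
      show (1:ℝ) ≤ (s:ℝ) from by exact_mod_cast hs]
  have hmul := mul_le_mul_of_nonneg_left hAcardR hc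
  linarith
end

section
/- Let A, B be finite nonempty subsets of ℝ², let l be a line through the origin, let r₁ be the number of lines parallel to l meeting A and r₂ the number of lines parallel to l meeting B. Then |A + B| ≥ (|A|/r₁ + |B|/r₂ − 1)(r₁ + r₂ − 1). -/
open Pointwise Finset

private lemma core_base (a b c : ℝ → ℝ) (x : ℝ) (Y : Finset ℝ) (hY : Y.Nonempty)
    (hcab : ∀ y ∈ Y, a x + b y - 1 ≤ c (x + y)) :
    (a x + (∑ y ∈ Y, b y) / Y.card - 1) * Y.card ≤ ∑ z ∈ {x} + Y, c z := by
  have hn : (0:ℝ) < Y.card := by exact_mod_cast hY.card_pos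
  have himg : ({x} : Finset ℝ) + Y = Y.image (fun y => x + y) := by
    ext z
    simp only [Finset.mem_add, Finset.mem_singleton, Finset.mem_image]
    constructor
    · rintro ⟨p, rfl, q, hq, rfl⟩; exact ⟨q, hq, rfl⟩
    · rintro ⟨y, hy, rfl⟩; exact ⟨x, rfl, y, hy, rfl⟩
  rw [himg, Finset.sum_image (fun y _ y' _ h => by simpa using add_left_cancel h)]
  have h1 : ∑ y ∈ Y, (a x + b y - 1) ≤ ∑ y ∈ Y, c (x + y) :=
    Finset.sum_le_sum fun y hy => hcab y hy
  have h2 : ∑ y ∈ Y, (a x + b y - 1)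
      = (a x + (∑ y ∈ Y, b y) / Y.card - 1) * Y.card := by
    rw [Finset.sum_sub_distrib, Finset.sum_add_distrib, Finset.sum_const, Finset.sum_const]
    field_simp
    ring
  linarith

private lemma core (a b c : ℝ → ℝ) : ∀ (N : ℕ) (X Y : Finset ℝ),
    X.card + Y.card ≤ N → X.Nonempty → Y.Nonempty →
    (∀ z ∈ X + Y, 0 ≤ c z) → (∀ x ∈ X, ∀ y ∈ Y, a x + b y - 1 ≤ c (x + y)) →
    ((∑ x ∈ X, a x) / X.card + (∑ y ∈ Y, b y) / Y.card - 1) * (X.card + Y.card - 1)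
      ≤ ∑ z ∈ X + Y, c z := by
  intro N
  induction N with
  | zero => intro X Y hN hX hY _ _; have := hX.card_pos; omega
  | succ N ih =>
    intro X Y hN hX hY hc0 hcab
    rcases eq_or_lt_of_le (Nat.one_le_iff_ne_zero.mpr hX.card_pos.ne') with h1 | hX2
    · -- X.card = 1
      obtain ⟨x, rfl⟩ := Finset.card_eq_one.mp h1.symm
      have := core_base a b c x Y hY (fun y hy => hcab x (mem_singleton_self x) y hy)
      simp only [Finset.sum_singleton, Finset.card_singleton, Nat.cast_one] at *
      calc ((a x) / 1 + (∑ y ∈ Y, b y) / Y.card - 1) * (1 + Y.card - 1)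
          = (a x + (∑ y ∈ Y, b y) / Y.card - 1) * Y.card := by ring
        _ ≤ _ := this
    rcases eq_or_lt_of_le (Nat.one_le_iff_ne_zero.mpr hY.card_pos.ne') with h2 | hY2
    · -- Y.card = 1
      obtain ⟨y, rfl⟩ := Finset.card_eq_one.mp h2.symm
      have hcab' : ∀ x ∈ X, b y + a x - 1 ≤ c (y + x) := by
        intro x hx
        rw [add_comm (b y), add_comm y x]
        exact hcab x hx y (mem_singleton_self y)
      have := core_base b a c y X hX hcab'
      rw [add_comm ({y} : Finset ℝ) X] at this
      simp only [Finset.sum_singleton, Finset.card_singleton, Nat.cast_one] at *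
      calc ((∑ x ∈ X, a x) / X.card + b y / 1 - 1) * (X.card + 1 - 1)
          = (b y + (∑ x ∈ X, a x) / X.card - 1) * X.card := by ring
        _ ≤ _ := this
    -- both ≥ 2
    have hX2' : 2 ≤ X.card := hX2
    have hY2' : 2 ≤ Y.card := hY2
    set xm := X.max' hX with hxm
    set yn := Y.max' hY with hyn
    set m : ℝ := (X.card : ℝ) with hm
    set n : ℝ := (Y.card : ℝ) with hn
    set S : ℝ := ∑ x ∈ X, a x with hS
    set T : ℝ := ∑ y ∈ Y, b y with hT
    have hm2 : (2:ℝ) ≤ m := by simp only [hm]; exact_mod_cast hX2'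
    have hn2 : (2:ℝ) ≤ n := by simp only [hn]; exact_mod_cast hY2'
    have hm0 : m ≠ 0 := by linarith
    have hn0 : n ≠ 0 := by linarith
    have hm1 : m - 1 ≠ 0 := by linarith
    have hn1 : n - 1 ≠ 0 := by linarith
    have hcorner : a xm + b yn - 1 ≤ c (xm + yn) :=
      hcab xm (X.max'_mem hX) yn (Y.max'_mem hY)
    rcases le_or_gt 0 ((n - 1) * (S / m - a xm) + (m - 1) * (b yn - T / n)) with hD | hD
    · -- remove xm from X
      set X' := X.erase xm with hX'
      have hX'card : (X'.card : ℝ) = m - 1 := by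
        rw [hX', Finset.card_erase_of_mem (X.max'_mem hX), Nat.cast_sub (by omega)]
        norm_num [hm]
      have hX'ne : X'.Nonempty := Finset.card_pos.mp (by
        have : X'.card = X.card - 1 := Finset.card_erase_of_mem (X.max'_mem hX)
        omega)
      have hsub : X' + Y ⊆ X + Y :=
        Finset.add_subset_add_right (Finset.erase_subset _ _)
      have hnot : xm + yn ∉ X' + Y := by
        intro hmem
        rw [Finset.mem_add] at hmem
        obtain ⟨x', hx', y, hy, hxy⟩ := hmem
        have h1 : x' < xm := lt_of_le_of_ne (X.le_max' x' (Finset.mem_of_mem_erase hx'))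
          (Finset.ne_of_mem_erase hx')
        have h2 : y ≤ yn := Y.le_max' y hy
        linarith [hxy]
      have hins : insert (xm + yn) (X' + Y) ⊆ X + Y := by
        refine Finset.insert_subset ?_ hsub
        exact Finset.add_mem_add (X.max'_mem hX) (Y.max'_mem hY)
      have hsum : ∑ z ∈ insert (xm + yn) (X' + Y), c z ≤ ∑ z ∈ X + Y, c z :=
        Finset.sum_le_sum_of_subset_of_nonneg hins (fun z hz _ => hc0 z hz)
      rw [Finset.sum_insert hnot] at hsum
      have hih := ih X' Y (by
        have : X'.card = X.card - 1 := Finset.card_erase_of_mem (X.max'_mem hX)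
        omega) hX'ne hY (fun z hz => hc0 z (hsub hz))
        (fun x hx y hy => hcab x (Finset.mem_of_mem_erase hx) y hy)
      have hS' : ∑ x ∈ X', a x = S - a xm := by
        rw [hX', Finset.sum_erase_eq_sub (X.max'_mem hX)]
      rw [hS', hX'card] at hih
      have key : ((S - a xm) / (m - 1) + T / n - 1) * (m - 1 + n - 1) + (a xm + b yn - 1)
          - (S / m + T / n - 1) * (m + n - 1)
          = ((n - 1) * (S / m - a xm) + (m - 1) * (b yn - T / n)) / (m - 1) := by
        field_simp [hm0, hn0, hm1, hn1]
        ring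
      have : (S / m + T / n - 1) * (m + n - 1)
          ≤ ((S - a xm) / (m - 1) + T / n - 1) * (m - 1 + n - 1) + (a xm + b yn - 1) := by
        have hpos : 0 ≤ ((n - 1) * (S / m - a xm) + (m - 1) * (b yn - T / n)) / (m - 1) :=
          div_nonneg hD (by linarith)
        linarith [key]
      calc (S / m + T / n - 1) * (m + n - 1)
          ≤ ((S - a xm) / (m - 1) + T / n - 1) * ((m - 1) + n - 1) + (a xm + b yn - 1) := by
            linarith
        _ ≤ ∑ z ∈ X' + Y, c z + (a xm + b yn - 1) := by linarith [hih]
        _ ≤ ∑ z ∈ X' + Y, c z + c (xm + yn) := by linarith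
        _ ≤ ∑ z ∈ X + Y, c z := by linarith
    · -- remove yn from Y
      set Y' := Y.erase yn with hY'
      have hY'card : (Y'.card : ℝ) = n - 1 := by
        rw [hY', Finset.card_erase_of_mem (Y.max'_mem hY), Nat.cast_sub (by omega)]
        norm_num [hn]
      have hY'ne : Y'.Nonempty := Finset.card_pos.mp (by
        have : Y'.card = Y.card - 1 := Finset.card_erase_of_mem (Y.max'_mem hY)
        omega)
      have hsub : X + Y' ⊆ X + Y :=
        Finset.add_subset_add_left (Finset.erase_subset _ _)
      have hnot : xm + yn ∉ X + Y' := by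
        intro hmem
        rw [Finset.mem_add] at hmem
        obtain ⟨x', hx', y, hy, hxy⟩ := hmem
        have h1 : y < yn := lt_of_le_of_ne (Y.le_max' y (Finset.mem_of_mem_erase hy))
          (Finset.ne_of_mem_erase hy)
        have h2 : x' ≤ xm := X.le_max' x' hx'
        linarith [hxy]
      have hins : insert (xm + yn) (X + Y') ⊆ X + Y := by
        refine Finset.insert_subset ?_ hsub
        exact Finset.add_mem_add (X.max'_mem hX) (Y.max'_mem hY)
      have hsum : ∑ z ∈ insert (xm + yn) (X + Y'), c z ≤ ∑ z ∈ X + Y, c z :=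
        Finset.sum_le_sum_of_subset_of_nonneg hins (fun z hz _ => hc0 z hz)
      rw [Finset.sum_insert hnot] at hsum
      have hih := ih X Y' (by
        have : Y'.card = Y.card - 1 := Finset.card_erase_of_mem (Y.max'_mem hY)
        omega) hX hY'ne (fun z hz => hc0 z (hsub hz))
        (fun x hx y hy => hcab x hx y (Finset.mem_of_mem_erase hy))
      have hT' : ∑ y ∈ Y', b y = T - b yn := by
        rw [hY', Finset.sum_erase_eq_sub (Y.max'_mem hY)]
      rw [hT', hY'card] at hih
      have key : (S / m + (T - b yn) / (n - 1) - 1) * (m + (n - 1) - 1) + (a xm + b yn - 1)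
          - (S / m + T / n - 1) * (m + n - 1)
          = ((m - 1) * (T / n - b yn) + (n - 1) * (a xm - S / m)) / (n - 1) := by
        field_simp [hm0, hn0, hm1, hn1]
        ring
      have hD' : 0 ≤ (m - 1) * (T / n - b yn) + (n - 1) * (a xm - S / m) := by linarith
      have : (S / m + T / n - 1) * (m + n - 1)
          ≤ (S / m + (T - b yn) / (n - 1) - 1) * (m + (n - 1) - 1) + (a xm + b yn - 1) := by
        have hpos : 0 ≤ ((m - 1) * (T / n - b yn) + (n - 1) * (a xm - S / m)) / (n - 1) :=
          div_nonneg hD' (by linarith)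
        linarith [key]
      calc (S / m + T / n - 1) * (m + n - 1)
          ≤ (S / m + (T - b yn) / (n - 1) - 1) * (m + (n - 1) - 1) + (a xm + b yn - 1) := by
            linarith
        _ ≤ ∑ z ∈ X + Y', c z + (a xm + b yn - 1) := by linarith [hih]
        _ ≤ ∑ z ∈ X + Y', c z + c (xm + yn) := by linarith
        _ ≤ ∑ z ∈ X + Y, c z := by linarith
open Pointwise Finset

private lemma fiber_bound (A B : Finset (ℝ × ℝ)) (x y : ℝ)
    (hx : x ∈ A.image Prod.fst) (hy : y ∈ B.image Prod.fst) :
    ((A.filter fun p => p.1 = x).card : ℝ) + ((B.filter fun p => p.1 = y).card : ℝ) - 1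
      ≤ (((A + B).filter fun p => p.1 = x + y).card : ℝ) := by
  set Ax := A.filter fun p => p.1 = x with hAx
  set By := B.filter fun p => p.1 = y with hBy
  have hAxne : Ax.Nonempty := by
    obtain ⟨p, hp, rfl⟩ := Finset.mem_image.mp hx
    exact ⟨p, Finset.mem_filter.mpr ⟨hp, rfl⟩⟩
  have hByne : By.Nonempty := by
    obtain ⟨p, hp, rfl⟩ := Finset.mem_image.mp hy
    exact ⟨p, Finset.mem_filter.mpr ⟨hp, rfl⟩⟩
  -- Ax + By ⊆ filter of A + B
  have hsub : Ax + By ⊆ (A + B).filter fun p => p.1 = x + y := by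
    intro z hz
    rw [Finset.mem_add] at hz
    obtain ⟨p, hp, q, hq, rfl⟩ := hz
    rw [Finset.mem_filter] at hp hq ⊢
    exact ⟨Finset.add_mem_add hp.1 hq.1, by rw [Prod.fst_add, hp.2, hq.2]⟩
  -- second coordinates
  have hSx : (Ax.image Prod.snd).card = Ax.card := by
    apply Finset.card_image_of_injOn
    intro p hp q hq h
    simp only [hAx, Finset.coe_filter, Set.mem_setOf_eq] at hp hq
    exact Prod.ext (hp.2.trans hq.2.symm) h
  have hTy : (By.image Prod.snd).card = By.card := by
    apply Finset.card_image_of_injOn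
    intro p hp q hq h
    simp only [hBy, Finset.coe_filter, Set.mem_setOf_eq] at hp hq
    exact Prod.ext (hp.2.trans hq.2.symm) h
  have hCD : (Ax.image Prod.snd).card + (By.image Prod.snd).card - 1
      ≤ ((Ax.image Prod.snd) + (By.image Prod.snd)).card :=
    cauchy_davenport_add_of_linearOrder_isCancelAdd (hAxne.image _) (hByne.image _)
  have himg : (Ax.image Prod.snd) + (By.image Prod.snd) = (Ax + By).image Prod.snd := by
    have := Finset.image_add (AddMonoidHom.snd ℝ ℝ) (s := Ax) (t := By)
    simpa using this.symm
  have h1 : ((Ax.image Prod.snd) + (By.image Prod.snd)).card ≤ (Ax + By).card := by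
    rw [himg]; exact Finset.card_image_le
  have h2 : (Ax + By).card ≤ ((A + B).filter fun p => p.1 = x + y).card :=
    Finset.card_le_card hsub
  have hAx1 : 1 ≤ Ax.card := hAxne.card_pos
  have hfinal : Ax.card + By.card - 1 ≤ ((A + B).filter fun p => p.1 = x + y).card := by
    omega
  have h3 : ((Ax.card + By.card - 1 : ℕ) : ℝ)
      ≤ (((A + B).filter fun p => p.1 = x + y).card : ℝ) := by exact_mod_cast hfinal
  rw [Nat.cast_sub (by omega : 1 ≤ Ax.card + By.card)] at h3
  push_cast at h3
  linarith

private lemma main' (A B : Finset (ℝ × ℝ)) (hA : A.Nonempty) (hB : B.Nonempty)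
    (core : ∀ (a b c : ℝ → ℝ) (X Y : Finset ℝ), X.Nonempty → Y.Nonempty →
      (∀ z ∈ X + Y, 0 ≤ c z) → (∀ x ∈ X, ∀ y ∈ Y, a x + b y - 1 ≤ c (x + y)) →
      ((∑ x ∈ X, a x) / X.card + (∑ y ∈ Y, b y) / Y.card - 1) * (X.card + Y.card - 1)
        ≤ ∑ z ∈ X + Y, c z) :
    ((A.card : ℝ) / (A.image Prod.fst).card + (B.card : ℝ) / (B.image Prod.fst).card - 1) *
      ((A.image Prod.fst).card + (B.image Prod.fst).card - 1) ≤ ((A + B).card : ℝ) := by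
  set X := A.image Prod.fst with hX
  set Y := B.image Prod.fst with hYdef
  set a : ℝ → ℝ := fun x => ((A.filter fun p => p.1 = x).card : ℝ) with ha
  set b : ℝ → ℝ := fun y => ((B.filter fun p => p.1 = y).card : ℝ) with hb
  set c : ℝ → ℝ := fun z => (((A + B).filter fun p => p.1 = z).card : ℝ) with hc
  have hXY : X + Y = (A + B).image Prod.fst := by
    rw [hX, hYdef]
    have := Finset.image_add (AddMonoidHom.fst ℝ ℝ) (s := A) (t := B)
    simpa using this.symm
  have hSa : ∑ x ∈ X, a x = (A.card : ℝ) := by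
    rw [hX, ha]
    rw [show (A.card : ℝ) = ((∑ x ∈ A.image Prod.fst, (A.filter fun p => p.1 = x).card : ℕ) : ℝ)
      from by rw [← Finset.card_eq_sum_card_image]]
    push_cast
    rfl
  have hSb : ∑ y ∈ Y, b y = (B.card : ℝ) := by
    rw [hYdef, hb]
    rw [show (B.card : ℝ) = ((∑ y ∈ B.image Prod.fst, (B.filter fun p => p.1 = y).card : ℕ) : ℝ)
      from by rw [← Finset.card_eq_sum_card_image]]
    push_cast
    rfl
  have hSc : ∑ z ∈ X + Y, c z = ((A + B).card : ℝ) := by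
    rw [hXY, hc]
    rw [show ((A + B).card : ℝ)
        = ((∑ z ∈ (A + B).image Prod.fst, ((A + B).filter fun p => p.1 = z).card : ℕ) : ℝ)
      from by rw [← Finset.card_eq_sum_card_image]]
    push_cast
    rfl
  have hbound := core a b c X Y (hA.image _) (hB.image _)
    (fun z _ => by positivity)
    (fun x hx y hy => fiber_bound A B x y hx hy)
  rw [hSa, hSb, hSc] at hbound
  exact hbound

/-- Grynkiewicz–Serra: let `A, B` be finite nonempty subsets of `ℝ²`, `l` a line
through the origin (spanned by `v ≠ 0`), `r₁` the number of lines parallel to `l`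
meeting `A` (i.e. the number of cosets of `l` meeting `A`) and `r₂` the number of
lines parallel to `l` meeting `B`. Then
`|A + B| ≥ (|A|/r₁ + |B|/r₂ − 1)(r₁ + r₂ − 1)`. -/
theorem stmt8 (A B : Finset (ℝ × ℝ)) (hA : A.Nonempty) (hB : B.Nonempty)
    (v : ℝ × ℝ) (hv : v ≠ 0) (r₁ r₂ : ℕ)
    (h₁ : r₁ = ((Submodule.span ℝ {v}).mkQ '' (A : Set (ℝ × ℝ))).ncard)
    (h₂ : r₂ = ((Submodule.span ℝ {v}).mkQ '' (B : Set (ℝ × ℝ))).ncard) :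
    ((A.card : ℝ) / r₁ + (B.card : ℝ) / r₂ - 1) * (r₁ + r₂ - 1) ≤ ((A + B).card : ℝ) := by
  classical
  have hv' : v.1 ≠ 0 ∨ v.2 ≠ 0 := by
    by_contra h
    push_neg at h
    exact hv (Prod.ext h.1 h.2)
  have hd : 0 < v.1 ^ 2 + v.2 ^ 2 := by
    rcases hv' with h | h
    · have := mul_self_pos.mpr h
      nlinarith [sq_nonneg v.2]
    · have := mul_self_pos.mpr h
      nlinarith [sq_nonneg v.1]
  set φ : (ℝ × ℝ) →ₗ[ℝ] ℝ :=
    { toFun := fun p => p.1 * v.2 - p.2 * v.1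
      map_add' := fun p q => by simp [Prod.fst_add, Prod.snd_add]; ring
      map_smul' := fun r p => by simp [Prod.smul_fst, Prod.smul_snd]; ring } with hφ
  set ψ : (ℝ × ℝ) →ₗ[ℝ] ℝ :=
    { toFun := fun p => p.1 * v.1 + p.2 * v.2
      map_add' := fun p q => by simp [Prod.fst_add, Prod.snd_add]; ring
      map_smul' := fun r p => by simp [Prod.smul_fst, Prod.smul_snd]; ring } with hψ
  set L : (ℝ × ℝ) →ₗ[ℝ] ℝ × ℝ := φ.prod ψ with hL
  have hLinj : Function.Injective ⇑L := by
    intro p q h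
    have e1 : p.1 * v.2 - p.2 * v.1 = q.1 * v.2 - q.2 * v.1 := congrArg Prod.fst h
    have e2 : p.1 * v.1 + p.2 * v.2 = q.1 * v.1 + q.2 * v.2 := congrArg Prod.snd h
    have h1 : (p.1 - q.1) * (v.1 ^ 2 + v.2 ^ 2) = 0 := by linear_combination v.1 * e2 + v.2 * e1
    have h2 : (p.2 - q.2) * (v.1 ^ 2 + v.2 ^ 2) = 0 := by linear_combination v.2 * e2 - v.1 * e1
    have hd' : v.1 ^ 2 + v.2 ^ 2 ≠ 0 := ne_of_gt hd
    apply Prod.ext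
    · have := mul_eq_zero.mp h1
      rcases this with h' | h'
      · linarith
      · exact absurd h' hd'
    · have := mul_eq_zero.mp h2
      rcases this with h' | h'
      · linarith
      · exact absurd h' hd'
  have hker : Submodule.span ℝ {v} ≤ LinearMap.ker φ := by
    rw [Submodule.span_le, Set.singleton_subset_iff]
    rw [SetLike.mem_coe, LinearMap.mem_ker]
    show v.1 * v.2 - v.2 * v.1 = 0
    ring
  have hker2 : LinearMap.ker φ ≤ Submodule.span ℝ {v} := by
    intro p hp
    rw [LinearMap.mem_ker] at hp
    have hp' : p.1 * v.2 - p.2 * v.1 = 0 := hp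
    rw [Submodule.mem_span_singleton]
    rcases hv' with h | h
    · refine ⟨p.1 / v.1, Prod.ext ?_ ?_⟩
      · show p.1 / v.1 * v.1 = p.1
        field_simp
      · show p.1 / v.1 * v.2 = p.2
        field_simp
        linarith [hp']
    · refine ⟨p.2 / v.2, Prod.ext ?_ ?_⟩
      · show p.2 / v.2 * v.1 = p.1
        field_simp
        linarith [hp']
      · show p.2 / v.2 * v.2 = p.2
        field_simp
  -- identify r₁, r₂ with card of image under φ
  have hcard : ∀ C : Finset (ℝ × ℝ),
      ((Submodule.span ℝ {v}).mkQ '' (C : Set (ℝ × ℝ))).ncard = (C.image ⇑φ).card := by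
    intro C
    set Q := Submodule.span ℝ {v}
    have hinj : Function.Injective ⇑(Q.liftQ φ hker) := by
      rw [← LinearMap.ker_eq_bot]
      exact Submodule.ker_liftQ_eq_bot Q φ hker hker2
    have hcomp : ⇑(Q.liftQ φ hker) ∘ ⇑Q.mkQ = ⇑φ := by
      funext p
      exact LinearMap.congr_fun (Submodule.liftQ_mkQ Q φ hker) p
    calc (Q.mkQ '' (C : Set (ℝ × ℝ))).ncard
        = ((Q.liftQ φ hker) '' (Q.mkQ '' (C : Set (ℝ × ℝ)))).ncard :=
          (Set.ncard_image_of_injective _ hinj).symm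
      _ = (⇑φ '' (C : Set (ℝ × ℝ))).ncard := by rw [← Set.image_comp, hcomp]
      _ = (C.image ⇑φ).card := by rw [← Finset.coe_image, Set.ncard_coe_finset]
  -- transfer to image under L
  set A' := A.image ⇑L with hA'
  set B' := B.image ⇑L with hB'
  have hA'ne : A'.Nonempty := hA.image _
  have hB'ne : B'.Nonempty := hB.image _
  have hA'card : A'.card = A.card := Finset.card_image_of_injective _ hLinj
  have hB'card : B'.card = B.card := Finset.card_image_of_injective _ hLinj
  have hABimg : A' + B' = (A + B).image ⇑L := (Finset.image_add L).symm
  have hABcard : (A' + B').card = (A + B).card := by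
    rw [hABimg]; exact Finset.card_image_of_injective _ hLinj
  have hfst : ∀ C : Finset (ℝ × ℝ), (C.image ⇑L).image Prod.fst = C.image ⇑φ := by
    intro C
    rw [Finset.image_image]
    rfl
  have hr1 : (r₁ : ℝ) = ((A'.image Prod.fst).card : ℝ) := by
    rw [h₁, hcard A, hA', hfst A]
  have hr2 : (r₂ : ℝ) = ((B'.image Prod.fst).card : ℝ) := by
    rw [h₂, hcard B, hB', hfst B]
  have hmain := main' A' B' hA'ne hB'ne
    (fun a b c X Y hX hY hc0 hcab => core a b c (X.card + Y.card) X Y le_rfl hX hY hc0 hcab)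
  rw [hA'card, hB'card, hABcard] at hmain
  rw [hr1, hr2]
  exact_mod_cast hmain
end

section
/- Let A, B be finite nonempty subsets of ℝ^d with |A| ≥ |B| and such that A + B has affine dimension d. Then |A + B| ≥ |A| + d|B| − d(d+1)/2. -/
open Pointwise Submodule

variable {n : ℕ}

local notation "V" => Fin n → ℝ

/-- There is a linear functional not vanishing on a given finite set of nonzero vectors. -/
lemma exists_functional_ne_zero (D : Finset V) (hD : (0 : V) ∉ D) :
    ∃ φ : V →ₗ[ℝ] ℝ, ∀ u ∈ D, φ u ≠ 0 := by
  classical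
  induction D using Finset.induction_on with
  | empty => exact ⟨0, by simp⟩
  | @insert u D hu ih =>
    have hu0 : u ≠ 0 := by rintro rfl; exact hD (Finset.mem_insert_self _ _)
    have h0D : (0 : V) ∉ D := fun h => hD (Finset.mem_insert_of_mem h)
    obtain ⟨φ, hφ⟩ := ih h0D
    obtain ⟨i, hi⟩ : ∃ i, u i ≠ 0 := by
      by_contra h; push_neg at h; exact hu0 (funext h)
    set η : V →ₗ[ℝ] ℝ := LinearMap.proj i with hη
    have hηu : η u ≠ 0 := hi
    -- chose c avoiding finitely many bad values
    obtain ⟨c, hc⟩ := Infinite.exists_notMem_finset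
      ((insert u D).image (fun x => -φ x / η x))
    refine ⟨φ + c • η, ?_⟩
    intro x hx
    by_cases hηx : η x = 0
    · have hxD : x ∈ D := by
        rcases Finset.mem_insert.mp hx with rfl | h
        · exact absurd hηx hηu
        · exact h
      simpa [hηx] using hφ x hxD
    · intro hcon
      simp only [LinearMap.add_apply, LinearMap.smul_apply, smul_eq_mul] at hcon
      apply hc
      refine Finset.mem_image.mpr ⟨x, hx, ?_⟩
      field_simp
      linarith [hcon]

lemma exists_injOn_functional (A : Finset V) :
    ∃ φ : V →ₗ[ℝ] ℝ, Set.InjOn φ (A : Set V) := by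
  classical
  obtain ⟨φ, hφ⟩ := exists_functional_ne_zero
    (((A ×ˢ A).filter (fun p => p.1 ≠ p.2)).image (fun p => p.1 - p.2))
    (by
      simp only [Finset.mem_image, Finset.mem_filter, not_exists]
      rintro ⟨a, b⟩ ⟨⟨hmem, hne⟩, hab⟩
      exact hne (sub_eq_zero.mp hab) )
  refine ⟨φ, ?_⟩
  intro a ha b hb hab
  by_contra hne
  have : φ (a - b) ≠ 0 := hφ _ (Finset.mem_image.mpr
    ⟨(a, b), Finset.mem_filter.mpr ⟨Finset.mem_product.mpr ⟨ha, hb⟩, hne⟩, rfl⟩)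
  exact this (by simp [map_sub, hab])

/-- Farkas' lemma, elementary induction form. -/
lemma farkas_aux : ∀ (k : ℕ) (S : Finset V), S.card ≤ k → ∀ g : V,
    g ∉ span NNReal (S : Set V) →
    ∃ ψ : V →ₗ[ℝ] ℝ, 0 < ψ g ∧ ∀ s ∈ S, ψ s ≤ 0 := by
  classical
  intro k
  induction k with
  | zero =>
    intro S hS g hg
    have hS0 : S = ∅ := Finset.card_eq_zero.mp (Nat.le_zero.mp hS)
    subst hS0
    have hg0 : g ≠ 0 := by
      rintro rfl; exact hg (by simp)
    obtain ⟨i, hi⟩ : ∃ i, g i ≠ 0 := by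
      by_contra h; push_neg at h; exact hg0 (funext h)
    exact ⟨g i • LinearMap.proj i, by simpa using (mul_self_pos.mpr hi), by simp⟩
  | succ k ih =>
    intro S hS g hg
    rcases Finset.eq_empty_or_nonempty S with rfl | ⟨u, hu⟩
    · exact ih ∅ (by simp) g hg
    set S₀ := S.erase u with hS₀
    have hgS₀ : g ∉ span NNReal (S₀ : Set V) := by
      intro h
      exact hg (span_mono (by exact_mod_cast Finset.erase_subset _ _) h)
    have hcard₀ : S₀.card ≤ k := by
      have := Finset.card_erase_lt_of_mem hu
      rw [← hS₀] at this
      omega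
    obtain ⟨ψ₀, hψ₀g, hψ₀S₀⟩ := ih S₀ hcard₀ g hgS₀
    by_cases huψ : ψ₀ u ≤ 0
    · refine ⟨ψ₀, hψ₀g, ?_⟩
      intro s hs
      by_cases hsu : s = u
      · rwa [hsu]
      · exact hψ₀S₀ s (Finset.mem_erase.mpr ⟨hsu, hs⟩)
    push_neg at huψ
    -- the projection along u
    set π : V →ₗ[ℝ] V := LinearMap.id - ((ψ₀ u)⁻¹ • ψ₀).smulRight u with hπdef
    have hπ : ∀ x, π x = x - ((ψ₀ u)⁻¹ * ψ₀ x) • u := by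
      intro x; simp [hπdef, LinearMap.smulRight_apply, mul_comm]
    have hπu : π u = 0 := by
      rw [hπ]; rw [inv_mul_cancel₀ (ne_of_gt huψ)]; simp
    have hψ₀π : ∀ x, ψ₀ (π x) = 0 := by
      intro x
      rw [hπ]
      simp only [map_sub, map_smul, smul_eq_mul]
      field_simp
      ring
    set T : Finset V := S₀.image π with hT
    have hTcard : T.card ≤ k := le_trans (Finset.card_image_le) hcard₀
    -- π g is not in the cone of T
    have hπg : π g ∉ span NNReal (T : Set V) := by
      intro hmem
      obtain ⟨f, hf⟩ := mem_span_finset.mp hmem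
      -- choose representatives
      apply hg
      -- rep function
      have hrep : ∀ t ∈ T, ∃ s ∈ S₀, π s = t := by
        intro t ht
        obtain ⟨s, hs, hst⟩ := Finset.mem_image.mp ht
        exact ⟨s, hs, hst⟩
      choose rep hrepS hrepπ using hrep
      set y : V := ∑ t ∈ T.attach, f t.1 • rep t.1 t.2 with hy
      have hyS : y ∈ span NNReal (S : Set V) := by
        refine sum_mem (fun t _ => smul_mem _ _ (subset_span ?_))
        exact Finset.mem_coe.mpr (Finset.mem_of_mem_erase (hrepS t.1 t.2))
      have hπy : π y = π g := by
        rw [hy, map_sum, ← hf.2, ← Finset.sum_attach T (fun t => f t • t)]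
        refine Finset.sum_congr rfl (fun t _ => ?_)
        rw [NNReal.smul_def, NNReal.smul_def, map_smul, hrepπ t.1 t.2]
      -- g = y + coeff • u with coeff ≥ 0
      have hgy : g - y = ((ψ₀ u)⁻¹ * ψ₀ (g - y)) • u := by
        have h0 : π (g - y) = 0 := by rw [map_sub, hπy, sub_self]
        have h1 := hπ (g - y)
        rw [h0] at h1
        exact sub_eq_zero.mp h1.symm
      have hψ₀y : ψ₀ y ≤ 0 := by
        rw [hy, map_sum]
        refine Finset.sum_nonpos (fun t _ => ?_)
        have : ψ₀ (f t.1 • rep t.1 t.2) = (f t.1 : ℝ) * ψ₀ (rep t.1 t.2) := by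
          rw [NNReal.smul_def, map_smul, smul_eq_mul]
        rw [this]
        exact mul_nonpos_of_nonneg_of_nonpos (f t.1).2 (hψ₀S₀ _ (hrepS t.1 t.2))
      have hcoeff : 0 ≤ (ψ₀ u)⁻¹ * ψ₀ (g - y) := by
        apply mul_nonneg (le_of_lt (inv_pos.mpr huψ))
        rw [map_sub]; linarith
      have : g = y + ((ψ₀ u)⁻¹ * ψ₀ (g - y)).toNNReal • u := by
        rw [NNReal.smul_def, Real.coe_toNNReal _ hcoeff, ← hgy]; abel
      rw [this]
      exact add_mem hyS (smul_mem _ _ (subset_span (Finset.mem_coe.mpr hu)))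
    obtain ⟨ψ₁, hψ₁g, hψ₁T⟩ := ih T hTcard (π g) hπg
    refine ⟨ψ₁ ∘ₗ π, hψ₁g, ?_⟩
    intro s hs
    by_cases hsu : s = u
    · subst hsu
      simp [LinearMap.comp_apply, hπu]
    · exact hψ₁T (π s) (Finset.mem_image_of_mem π (Finset.mem_erase.mpr ⟨hsu, hs⟩))

set_option maxHeartbeats 1000000 in
/-- Key lemma: removing the unique `φ`-maxima from `A` and `B` leaves at least
`dim (A+B) + 1` elements of `A+B` uncovered. -/
lemma lemmaX (A B : Finset V) (φ : V →ₗ[ℝ] ℝ) (v w : Fin n → ℝ)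
    (hv : v ∈ A) (hw : w ∈ B)
    (hvmax : ∀ a ∈ A, a ≠ v → φ a < φ v) (hwmax : ∀ b ∈ B, b ≠ w → φ b < φ w) :
    Module.finrank ℝ (vectorSpan ℝ ((A + B : Finset V) : Set V)) + 1
      ≤ ((A + B) \ (A.erase v + B.erase w)).card := by
  classical
  set p₀ : V := v + w with hp₀def
  have hp₀ : p₀ ∈ A + B := Finset.add_mem_add hv hw
  have hp₀max : ∀ p ∈ A + B, p ≠ p₀ → φ p < φ p₀ := by
    intro p hp hne
    obtain ⟨a, ha, b, hb, rfl⟩ := Finset.mem_add.mp hp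
    by_cases hav : a = v
    · subst hav
      have hbw : b ≠ w := fun h => hne (by rw [h])
      have := hwmax b hb hbw
      rw [hp₀def]; simp only [map_add]; linarith
    · have h1 := hvmax a ha hav
      have h2 : φ b ≤ φ w := by
        by_cases hbw : b = w
        · rw [hbw]
        · linarith [hwmax b hb hbw]
      rw [hp₀def]; simp only [map_add]; linarith
  -- the set of "new" elements
  set X : Finset V := (A + B) \ (A.erase v + B.erase w) with hX
  have hp₀X : p₀ ∈ X := by
    refine Finset.mem_sdiff.mpr ⟨hp₀, ?_⟩
    intro hcon
    obtain ⟨a, ha, b, hb, hab⟩ := Finset.mem_add.mp hcon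
    have hav := Finset.mem_erase.mp ha
    have hbw := Finset.mem_erase.mp hb
    have h1 := hvmax a hav.2 hav.1
    have h2 := hwmax b hbw.2 hbw.1
    have : φ (a + b) < φ p₀ := by simp only [map_add, hp₀def]; linarith
    rw [hab] at this
    exact lt_irrefl _ this
  -- generators of the cone at p₀
  set gens : Finset V := ((A + B).erase p₀).image (fun p => p - p₀) with hgens
  have hgens_mem : ∀ x ∈ gens, p₀ + x ∈ A + B ∧ x ≠ 0 ∧ φ x < 0 := by
    intro x hx
    obtain ⟨p, hp, rfl⟩ := Finset.mem_image.mp hx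
    have hp' := Finset.mem_erase.mp hp
    refine ⟨by simpa using hp'.2, ?_, ?_⟩
    · intro h; exact hp'.1 (by rwa [sub_eq_zero] at h)
    · have := hp₀max p hp'.2 hp'.1
      simp only [map_sub]; linarith
  have hspan : Submodule.span ℝ (gens : Set V) = vectorSpan ℝ ((A + B : Finset V) : Set V) := by
    rw [vectorSpan_eq_span_vsub_set_right_ne ℝ (Finset.mem_coe.mpr hp₀)]
    congr 1
    rw [hgens, Finset.coe_image, Finset.coe_erase]
    ext x
    simp [vsub_eq_sub]
  -- choose a minimal generating subset G
  have hGex : ∃ G ∈ gens.powerset.filter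
      (fun G => ∀ x ∈ gens, x ∈ span NNReal ((G : Finset V) : Set V)), True := by
    refine ⟨gens, Finset.mem_filter.mpr ⟨Finset.mem_powerset_self _, fun x hx => subset_span hx⟩,
      trivial⟩
  obtain ⟨G, hGmem, -⟩ := hGex
  obtain ⟨G, hGmem, hGmin⟩ := Finset.exists_min_image
    (gens.powerset.filter (fun G => ∀ x ∈ gens, x ∈ span NNReal ((G : Finset V) : Set V)))
    Finset.card ⟨G, hGmem⟩
  have hGsub : G ⊆ gens := Finset.mem_powerset.mp (Finset.mem_filter.mp hGmem).1
  have hGspan : ∀ x ∈ gens, x ∈ span NNReal ((G : Finset V) : Set V) :=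
    (Finset.mem_filter.mp hGmem).2
  have hGnotin : ∀ g ∈ G, g ∉ span NNReal ((G.erase g : Finset V) : Set V) := by
    intro g hg hcon
    have herase : ∀ x ∈ gens, x ∈ span NNReal ((G.erase g : Finset V) : Set V) := by
      intro x hx
      have h1 : x ∈ span NNReal ((G : Finset V) : Set V) := hGspan x hx
      have h2 : ((G : Finset V) : Set V) = insert g ((G.erase g : Finset V) : Set V) := by
        rw [← Finset.coe_insert, Finset.insert_erase hg]
      rwa [h2, span_insert_eq_span hcon] at h1
    have hmem' : G.erase g ∈ gens.powerset.filter
        (fun G' => ∀ x ∈ gens, x ∈ span NNReal ((G' : Finset V) : Set V)) :=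
      Finset.mem_filter.mpr ⟨Finset.mem_powerset.mpr
        ((Finset.erase_subset _ _).trans hGsub), herase⟩
    have := hGmin _ hmem'
    have := Finset.card_erase_lt_of_mem hg
    omega
  -- for each g in G, construct a new point on the "edge" in direction g
  have hq : ∀ g ∈ G, ∃ (q : Fin n → ℝ) (s : ℝ), q ∈ A + B ∧ q ∉ A.erase v + B.erase w ∧ q = p₀ + s • g ∧ 0 < s := by
    intro g hg
    obtain ⟨hgAB, hg0, hgφ⟩ := hgens_mem g (hGsub hg)
    obtain ⟨ψ, hψg, hψle⟩ := farkas_aux (G.erase g).card (G.erase g) le_rfl g (hGnotin g hg)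
    set t : ℝ := ψ g / (-φ g) with ht
    have htpos : 0 < t := div_pos hψg (by linarith)
    set χ : V →ₗ[ℝ] ℝ := ψ + t • φ with hχ
    have hφne : φ g ≠ 0 := ne_of_lt hgφ
    have hχg : χ g = 0 := by
      simp only [hχ, LinearMap.add_apply, LinearMap.smul_apply, smul_eq_mul, ht]
      rw [div_neg, neg_mul, div_mul_cancel₀ _ hφne]
      ring
    have hχGlt : ∀ h ∈ G, h ≠ g → χ h < 0 := by
      intro h hh hne
      have h1 := hψle h (Finset.mem_erase.mpr ⟨hne, hh⟩)
      have h2 := (hgens_mem h (hGsub hh)).2.2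
      simp only [hχ, LinearMap.add_apply, LinearMap.smul_apply, smul_eq_mul]
      nlinarith
    have hχG : ∀ h ∈ G, χ h ≤ 0 := by
      intro h hh
      by_cases hne : h = g
      · rw [hne, hχg]
      · exact le_of_lt (hχGlt h hh hne)
    -- χ is nonpositive on the cone, with equality only on the ray of g
    have hχcone : ∀ x, x ∈ span NNReal ((G : Finset V) : Set V) →
        χ x ≤ 0 ∧ (χ x = 0 → ∃ c : ℝ, 0 ≤ c ∧ x = c • g) := by
      intro x hx
      obtain ⟨f, hf⟩ := mem_span_finset.mp hx
      have hterm : ∀ h ∈ G, χ (f h • h) = (f h : ℝ) * χ h := by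
        intro h _
        rw [NNReal.smul_def, map_smul, smul_eq_mul]
      have hχx : χ x = ∑ h ∈ G, (f h : ℝ) * χ h := by
        rw [← hf.2, map_sum]
        exact Finset.sum_congr rfl hterm
      have hnonpos : ∀ h ∈ G, (f h : ℝ) * χ h ≤ 0 := fun h hh =>
        mul_nonpos_of_nonneg_of_nonpos (f h).2 (hχG h hh)
      constructor
      · rw [hχx]; exact Finset.sum_nonpos hnonpos
      · intro hx0
        rw [hχx] at hx0
        have hall := (Finset.sum_eq_zero_iff_of_nonpos hnonpos).mp hx0
        refine ⟨(f g : ℝ), (f g).2, ?_⟩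
        rw [← hf.2]
        rw [Finset.sum_eq_single_of_mem g hg]
        · rw [NNReal.smul_def]
        · intro h hh hne
          have := hall h hh
          have hχh := hχGlt h hh hne
          have : (f h : ℝ) = 0 := by
            rcases mul_eq_zero.mp this with h1 | h1
            · exact h1
            · exact absurd h1 (ne_of_lt hχh)
          rw [NNReal.smul_def, this, zero_smul]
    -- χ attains its max on A+B exactly on the ray p₀ + ℝ≥0 g
    have hχP : ∀ p ∈ A + B, χ p ≤ χ p₀ ∧ (χ p = χ p₀ → ∃ c : ℝ, 0 ≤ c ∧ p = p₀ + c • g) := by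
      intro p hp
      by_cases hpp : p = p₀
      · exact ⟨le_of_eq (by rw [hpp]), fun _ => ⟨0, le_refl 0, by rw [hpp]; simp⟩⟩
      · have hx : p - p₀ ∈ gens := Finset.mem_image.mpr
          ⟨p, Finset.mem_erase.mpr ⟨hpp, hp⟩, rfl⟩
        have hmem := hGspan _ hx
        have h1 := hχcone _ hmem
        constructor
        · have := h1.1; simp only [map_sub] at this; linarith
        · intro heq
          have hz : χ (p - p₀) = 0 := by simp only [map_sub]; linarith [heq]
          obtain ⟨c, hc0, hc⟩ := h1.2 hz
          exact ⟨c, hc0, by rw [← hc]; abel⟩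
    -- the scaled coordinate along the ray
    set r : V → ℝ := fun p => φ (p - p₀) / φ g with hr
    have hrval : ∀ p, ∀ c : ℝ, p = p₀ + c • g → r p = c := by
      intro p c hc
      subst hc
      show φ (p₀ + c • g - p₀) / φ g = c
      rw [add_sub_cancel_left, map_smul, smul_eq_mul]
      field_simp
    set P₁ := (A + B).filter (fun p => χ p = χ p₀) with hP₁
    set Pp := P₁.erase p₀ with hPp
    have hgP : p₀ + g ∈ Pp := by
      refine Finset.mem_erase.mpr ⟨?_, Finset.mem_filter.mpr ⟨(hgens_mem g (hGsub hg)).1, ?_⟩⟩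
      · intro hcon
        apply hg0
        have : p₀ + g - p₀ = (0 : V) := by rw [hcon]; abel
        rwa [add_sub_cancel_left] at this
      · rw [map_add, hχg, add_zero]
    have hPpos : ∀ p ∈ Pp, 0 < r p ∧ p = p₀ + r p • g := by
      intro p hp
      have hp' := Finset.mem_erase.mp hp
      have hp'' := Finset.mem_filter.mp hp'.2
      obtain ⟨c, hc0, hc⟩ := (hχP p hp''.1).2 hp''.2
      have hrp := hrval p c hc
      refine ⟨?_, by rw [hrp]; exact hc⟩
      rw [hrp]
      rcases lt_or_eq_of_le hc0 with h | h
      · exact h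
      · exfalso; apply hp'.1; rw [hc, ← h]; simp
    -- take the minimum positive coordinate
    have hne : (Pp.image r).Nonempty := ⟨r (p₀ + g), Finset.mem_image_of_mem r hgP⟩
    set s := (Pp.image r).min' hne with hs
    obtain ⟨q, hqPp, hqr⟩ := Finset.mem_image.mp ((Pp.image r).min'_mem hne)
    rw [← hs] at hqr
    have hspos : 0 < s := by rw [← hqr]; exact (hPpos q hqPp).1
    have hq1 : q = p₀ + s • g := by rw [← hqr]; exact (hPpos q hqPp).2
    have hqAB : q ∈ A + B := (Finset.mem_filter.mp (Finset.mem_erase.mp hqPp).2).1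
    refine ⟨q, s, hqAB, ?_, hq1, hspos⟩
    -- q is not in A' + B'
    intro hcon
    obtain ⟨a, ha, b, hb, hab⟩ := Finset.mem_add.mp hcon
    have hav := Finset.mem_erase.mp ha
    have hbw := Finset.mem_erase.mp hb
    -- χ a = χ v and χ b = χ w
    have haw : a + w ∈ A + B := Finset.add_mem_add hav.2 hw
    have hvb : v + b ∈ A + B := Finset.add_mem_add hv hbw.2
    have h1 := (hχP _ haw).1
    have h2 := (hχP _ hvb).1
    have hqχ : χ q = χ p₀ := (Finset.mem_filter.mp (Finset.mem_erase.mp hqPp).2).2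
    have hsum : χ a + χ b = χ v + χ w := by
      have hh : χ (a + b) = χ p₀ := by rw [hab]; exact hqχ
      rw [hp₀def] at hh
      rw [map_add, map_add] at hh
      exact hh
    have hp₀χ : χ p₀ = χ v + χ w := by rw [hp₀def, map_add]
    have haχ : χ (a + w) = χ p₀ := by
      rw [map_add, hp₀χ]
      rw [map_add, hp₀χ] at h1
      rw [map_add, hp₀χ] at h2
      linarith
    have hbχ : χ (v + b) = χ p₀ := by
      rw [map_add, hp₀χ]
      rw [map_add, hp₀χ] at h1
      rw [map_add, hp₀χ] at h2
      linarith
    have hawPp : a + w ∈ Pp := by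
      refine Finset.mem_erase.mpr ⟨?_, Finset.mem_filter.mpr ⟨haw, haχ⟩⟩
      intro h
      exact hav.1 (by have := add_right_cancel (h.trans hp₀def); exact this)
    have hvbPp : v + b ∈ Pp := by
      refine Finset.mem_erase.mpr ⟨?_, Finset.mem_filter.mpr ⟨hvb, hbχ⟩⟩
      intro h
      exact hbw.1 (by have := add_left_cancel (h.trans hp₀def); exact this)
    obtain ⟨c₁pos, e1⟩ := hPpos _ hawPp
    obtain ⟨c₂pos, e2⟩ := hPpos _ hvbPp
    set c₁ := r (a + w) with hc₁
    set c₂ := r (v + b) with hc₂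
    have hmin1 : s ≤ c₁ := (Pp.image r).min'_le _ (Finset.mem_image_of_mem r hawPp)
    have ea : a = p₀ + c₁ • g - w := eq_sub_of_add_eq e1
    have eb : b = p₀ + c₂ • g - v := eq_sub_of_add_eq (by rw [add_comm] at e2; exact e2)
    have hq2 : q = p₀ + (c₁ + c₂) • g := by
      rw [← hab, ea, eb, add_smul, hp₀def]
      abel
    have hradd : r q = c₁ + c₂ := hrval q _ hq2
    linarith [hqr, hradd, hmin1, c₂pos]
  -- package into an injective map G → X \ {p₀}
  choose qf sf hqf1 hqf2 hqf3 hqf4 using hq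
  have hQinj : ∀ g₁ (h₁ : g₁ ∈ G), ∀ g₂ (h₂ : g₂ ∈ G), qf g₁ h₁ = qf g₂ h₂ → g₁ = g₂ := by
    intro g₁ h₁ g₂ h₂ heq
    by_contra hne
    have e1 := hqf3 g₁ h₁
    have e2 := hqf3 g₂ h₂
    rw [e1, e2] at heq
    have hsmul : sf g₁ h₁ • g₁ = sf g₂ h₂ • g₂ := by
      have := add_left_cancel heq; exact this
    have hcpos : (0:ℝ) ≤ sf g₁ h₁ / sf g₂ h₂ :=
      le_of_lt (div_pos (hqf4 g₁ h₁) (hqf4 g₂ h₂))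
    have hg2 : g₂ = (⟨_, hcpos⟩ : NNReal) • g₁ := by
      show g₂ = (sf g₁ h₁ / sf g₂ h₂) • g₁
      rw [div_eq_mul_inv, mul_comm, mul_smul, hsmul, ← mul_smul,
        inv_mul_cancel₀ (ne_of_gt (hqf4 g₂ h₂)), one_smul]
    apply hGnotin g₂ h₂
    have hmem2 : (⟨_, hcpos⟩ : NNReal) • g₁ ∈ span NNReal ((G.erase g₂ : Finset (Fin n → ℝ)) : Set (Fin n → ℝ)) :=
      smul_mem _ _ (subset_span (Finset.mem_coe.mpr (Finset.mem_erase.mpr ⟨hne, h₁⟩)))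
    rw [← hg2] at hmem2
    exact hmem2
  -- conclude the cardinality bound
  have hGX : ∀ g (hg : g ∈ G), qf g hg ∈ X.erase p₀ := by
    intro g hg
    refine Finset.mem_erase.mpr ⟨?_, Finset.mem_sdiff.mpr ⟨hqf1 g hg, hqf2 g hg⟩⟩
    intro hcon
    rw [hqf3 g hg] at hcon
    have : sf g hg • g = 0 := by
      have : p₀ + sf g hg • g - p₀ = (0:V) := by rw [hcon]; abel
      rwa [add_sub_cancel_left] at this
    rcases smul_eq_zero.mp this with h | h
    · exact (ne_of_gt (hqf4 g hg)) h
    · exact (hgens_mem g (hGsub hg)).2.1 h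
  have hcard1 : G.card ≤ (X.erase p₀).card := by
    have himg : (G.attach.image (fun g => qf g.1 g.2)) ⊆ X.erase p₀ := by
      intro x hx
      obtain ⟨g, -, rfl⟩ := Finset.mem_image.mp hx
      exact hGX g.1 g.2
    have hinj : (G.attach.image (fun g => qf g.1 g.2)).card = G.attach.card := by
      apply Finset.card_image_of_injOn
      intro g₁ h₁ g₂ h₂ heq
      exact Subtype.ext (hQinj g₁.1 g₁.2 g₂.1 g₂.2 heq)
    calc G.card = G.attach.card := (Finset.card_attach).symm
      _ = (G.attach.image (fun g => qf g.1 g.2)).card := hinj.symm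
      _ ≤ (X.erase p₀).card := Finset.card_le_card himg
  have hcard2 : (X.erase p₀).card + 1 = X.card := by
    rw [Finset.card_erase_of_mem hp₀X]
    have : 1 ≤ X.card := Finset.card_pos.mpr ⟨p₀, hp₀X⟩
    omega
  -- finrank bound
  have hrank : Module.finrank ℝ (vectorSpan ℝ ((A + B : Finset V) : Set V)) ≤ G.card := by
    rw [← hspan]
    have hsub : (gens : Set V) ⊆ (span ℝ ((G : Finset V) : Set V) : Set V) := by
      intro x hx
      have h1 := hGspan x hx
      obtain ⟨f, hf⟩ := mem_span_finset.mp h1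
      rw [← hf.2]
      refine sum_mem (fun h hh => ?_)
      rw [NNReal.smul_def]
      exact smul_mem _ _ (subset_span hh)
    have h2 : span ℝ (gens : Set V) ≤ span ℝ ((G : Finset V) : Set V) := span_le.mpr hsub
    calc Module.finrank ℝ (span ℝ (gens : Set V)) ≤ Module.finrank ℝ (span ℝ ((G : Finset V) : Set V)) :=
          Submodule.finrank_mono h2
      _ ≤ G.card := finrank_span_finset_le_card G
  omega

/-- The span of a finset sum is below the sup of the spans. -/
lemma vectorSpan_add_le (A B : Finset V) :
    vectorSpan ℝ ((A + B : Finset V) : Set V) ≤ vectorSpan ℝ (A : Set V) ⊔ vectorSpan ℝ (B : Set V) := by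
  rw [vectorSpan_def]
  rw [span_le]
  rintro x ⟨p, hp, q, hq, rfl⟩
  beta_reduce
  rw [Finset.coe_add] at hp hq
  obtain ⟨a, ha, b, hb, rfl⟩ := hp
  obtain ⟨a', ha', b', hb', rfl⟩ := hq
  have : (a + b) -ᵥ (a' + b') = (a - a') + (b - b') := by
    simp [vsub_eq_sub]; abel
  rw [this]
  exact add_mem (le_sup_left (α := Submodule ℝ V)
      (vsub_mem_vectorSpan ℝ ha ha'))
    (le_sup_right (α := Submodule ℝ V) (vsub_mem_vectorSpan ℝ hb hb'))

lemma vectorSpan_le_add_left (A B : Finset V) (hB : B.Nonempty) :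
    vectorSpan ℝ (A : Set V) ≤ vectorSpan ℝ ((A + B : Finset V) : Set V) := by
  obtain ⟨b₀, hb₀⟩ := hB
  rw [vectorSpan_def, span_le]
  rintro x ⟨a, ha, a', ha', rfl⟩
  beta_reduce
  have : a -ᵥ a' = (a + b₀) -ᵥ (a' + b₀) := by simp [vsub_eq_sub]
  rw [this]
  exact vsub_mem_vectorSpan ℝ
    (by rw [Finset.coe_add]; exact Set.add_mem_add ha hb₀)
    (by rw [Finset.coe_add]; exact Set.add_mem_add ha' hb₀)

lemma vectorSpan_le_add_right (A B : Finset V) (hA : A.Nonempty) :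
    vectorSpan ℝ (B : Set V) ≤ vectorSpan ℝ ((A + B : Finset V) : Set V) := by
  obtain ⟨a₀, ha₀⟩ := hA
  rw [vectorSpan_def, span_le]
  rintro x ⟨b, hb, b', hb', rfl⟩
  beta_reduce
  have : b -ᵥ b' = (a₀ + b) -ᵥ (a₀ + b') := by simp [vsub_eq_sub]
  rw [this]
  exact vsub_mem_vectorSpan ℝ
    (by rw [Finset.coe_add]; exact Set.add_mem_add ha₀ hb)
    (by rw [Finset.coe_add]; exact Set.add_mem_add ha₀ hb')

/-- vectorSpan of a set is below vectorSpan of the erased set joined with the line. -/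
lemma vectorSpan_erase_le (A : Finset V) (v a₀ : Fin n → ℝ) (ha₀ : a₀ ∈ A.erase v) :
    vectorSpan ℝ (A : Set V) ≤ vectorSpan ℝ ((A.erase v : Finset V) : Set V) ⊔ span ℝ {v - a₀} := by
  classical
  have key : ∀ a ∈ A, a - a₀ ∈ vectorSpan ℝ ((A.erase v : Finset V) : Set V) ⊔ span ℝ {v - a₀} := by
    intro a ha
    by_cases hav : a = v
    · subst hav
      exact le_sup_right (α := Submodule ℝ V) (subset_span rfl)
    · exact le_sup_left (α := Submodule ℝ V)
        (vsub_mem_vectorSpan ℝ (Finset.mem_coe.mpr (Finset.mem_erase.mpr ⟨hav, ha⟩))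
          (Finset.mem_coe.mpr ha₀))
  rw [vectorSpan_def, span_le]
  rintro x ⟨a, ha, a', ha', rfl⟩
  beta_reduce
  have : a -ᵥ a' = (a - a₀) - (a' - a₀) := by simp [vsub_eq_sub]
  rw [this]
  exact sub_mem (key a ha) (key a' ha')

lemma finrank_sup_span_singleton_le (U : Submodule ℝ V) (x : Fin n → ℝ) :
    Module.finrank ℝ ↥(U ⊔ span ℝ {x}) ≤ Module.finrank ℝ U + 1 := by
  have h := finrank_sup_add_finrank_inf_eq U (span ℝ {x})
  have h2 : Module.finrank ℝ ↥(span ℝ ({x} : Set V)) ≤ 1 := by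
    by_cases hx : x = 0
    · subst hx
      rw [Submodule.span_zero_singleton, finrank_bot]
      norm_num
    · rw [finrank_span_singleton hx]
  omega


lemma card_singleton_add (A : Finset V) (b : Fin n → ℝ) : ({b} + A).card = A.card := by
  classical
  rw [Finset.singleton_add]
  exact Finset.card_vadd_finset b A

lemma card_add_singleton (A : Finset V) (b : Fin n → ℝ) : (A + {b}).card = A.card := by
  classical
  rw [add_comm A {b}]
  exact card_singleton_add A b

set_option maxHeartbeats 2000000 in
theorem ruzsa_key : ∀ (K : ℕ) (A B : Finset V), A.Nonempty → B.Nonempty →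
    A.card + B.card ≤ K → B.card ≤ A.card + 1 →
    (A.card : ℝ) + (Module.finrank ℝ
        ↥(vectorSpan ℝ (A : Set V) ⊔ vectorSpan ℝ (B : Set V))) * B.card
      - (Module.finrank ℝ ↥(vectorSpan ℝ (A : Set V) ⊔ vectorSpan ℝ (B : Set V)))
        * ((Module.finrank ℝ ↥(vectorSpan ℝ (A : Set V) ⊔ vectorSpan ℝ (B : Set V))) + 1) / 2
      ≤ ((A + B).card : ℝ) := by
  classical
  intro K
  induction K with
  | zero =>
    intro A B hA hB hK _
    have := Finset.card_pos.mpr hA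
    have := Finset.card_pos.mpr hB
    omega
  | succ K ih =>
    intro A B hA hB hK hle
    set d := Module.finrank ℝ ↥(vectorSpan ℝ (A : Set V) ⊔ vectorSpan ℝ (B : Set V)) with hd
    by_cases hm1 : B.card = 1
    · -- B is a singleton
      obtain ⟨b, rfl⟩ := Finset.card_eq_one.mp hm1
      have hcard : (A + {b}).card = A.card := card_add_singleton A b
      have hbspan : vectorSpan ℝ (({b} : Finset V) : Set V) = ⊥ := by
        rw [Finset.coe_singleton]; exact vectorSpan_singleton ℝ b
      have hd' : d = Module.finrank ℝ ↥(vectorSpan ℝ (A : Set V)) := by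
        rw [hd, hbspan, sup_bot_eq]
      rw [hcard, hm1]
      rcases Nat.eq_zero_or_pos d with h0 | h1
      · rw [h0]; norm_num
      · have h1R : (1:ℝ) ≤ (d:ℝ) := by exact_mod_cast h1
        nlinarith [h1R]
    · by_cases hn1 : A.card = 1
      · -- A is a singleton, B has exactly 2 elements
        have hB2 : B.card = 2 := by
          have := Finset.card_pos.mpr hB
          omega
        obtain ⟨a, rfl⟩ := Finset.card_eq_one.mp hn1
        obtain ⟨b₁, b₂, hbne, rfl⟩ := Finset.card_eq_two.mp hB2
        have hcard : (({a} : Finset V) + ({b₁, b₂} : Finset V)).card = 2 := by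
          rw [card_singleton_add]; exact hB2
        have haspan : vectorSpan ℝ (({a} : Finset V) : Set V) = ⊥ := by
          rw [Finset.coe_singleton]; exact vectorSpan_singleton ℝ a
        have hbspan : vectorSpan ℝ (({b₁, b₂} : Finset V) : Set V) = span ℝ {b₁ - b₂} := by
          have : (({b₁, b₂} : Finset V) : Set V) = {b₁, b₂} := by simp
          rw [this, vectorSpan_pair, vsub_eq_sub]
        have hd1 : d = 1 := by
          rw [hd, haspan, bot_sup_eq, hbspan, finrank_span_singleton (sub_ne_zero.mpr hbne)]
        rw [hcard, hd1, hB2, hn1]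
        norm_num
      -- main case : |A| ≥ 2, |B| ≥ 2
      have hn2 : 2 ≤ A.card := by have := Finset.card_pos.mpr hA; omega
      have hm2 : 2 ≤ B.card := by have := Finset.card_pos.mpr hB; omega
      obtain ⟨φ, hφ⟩ := exists_injOn_functional (A ∪ B)
      have hφA : Set.InjOn φ (A : Set V) :=
        hφ.mono (by exact_mod_cast Finset.subset_union_left)
      have hφB : Set.InjOn φ (B : Set V) :=
        hφ.mono (by exact_mod_cast Finset.subset_union_right)
      obtain ⟨v, hv, hvle⟩ := Finset.exists_max_image A φ hA
      obtain ⟨w, hw, hwle⟩ := Finset.exists_max_image B φ hB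
      have hvmax : ∀ a ∈ A, a ≠ v → φ a < φ v := fun a ha hne =>
        lt_of_le_of_ne (hvle a ha) (fun h => hne (hφA (Finset.mem_coe.mpr ha) (Finset.mem_coe.mpr hv) h))
      have hwmax : ∀ b ∈ B, b ≠ w → φ b < φ w := fun b hb hne =>
        lt_of_le_of_ne (hwle b hb) (fun h => hne (hφB (Finset.mem_coe.mpr hb) (Finset.mem_coe.mpr hw) h))
      set A' := A.erase v with hA'def
      set B' := B.erase w with hB'def
      have hA'card : A'.card = A.card - 1 := Finset.card_erase_of_mem hv
      have hB'card : B'.card = B.card - 1 := Finset.card_erase_of_mem hw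
      have hA' : A'.Nonempty := Finset.card_pos.mp (by omega)
      have hB' : B'.Nonempty := Finset.card_pos.mp (by omega)
      obtain ⟨a₀, ha₀⟩ := hA'
      obtain ⟨b₀, hb₀⟩ := hB'
      have ha₀A : a₀ ∈ A := Finset.mem_of_mem_erase ha₀
      have hb₀B : b₀ ∈ B := Finset.mem_of_mem_erase hb₀
      set Vp := vectorSpan ℝ (A' : Set V) ⊔ vectorSpan ℝ (B' : Set V) with hVp
      set D := Module.finrank ℝ ↥Vp with hD
      have hV'W : Vp ≤ vectorSpan ℝ (A : Set V) ⊔ vectorSpan ℝ (B : Set V) :=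
        sup_le_sup (vectorSpan_mono ℝ (by exact_mod_cast Finset.erase_subset v A))
          (vectorSpan_mono ℝ (by exact_mod_cast Finset.erase_subset w B))
      have hDd : D ≤ d := Submodule.finrank_mono hV'W
      have hsub : A' + B' ⊆ A + B :=
        Finset.add_subset_add (Finset.erase_subset v A) (Finset.erase_subset w B)
      set X := (A + B) \ (A' + B') with hX
      have hcards : ((A + B).card : ℝ) = ((A' + B').card : ℝ) + (X.card : ℝ) := by
        have := Finset.card_sdiff_add_card_eq_card hsub
        push_cast [← this]
        ring
      -- induction hypothesis applied to A', B'
      have hIH := ih A' B' ⟨a₀, ha₀⟩ ⟨b₀, hb₀⟩ (by omega) (by omega)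
      rw [← hVp, ← hD] at hIH
      have hA'cardR : (A'.card : ℝ) = (A.card : ℝ) - 1 := by
        rw [hA'card]; push_cast [Nat.cast_sub (by omega : 1 ≤ A.card)]; ring
      have hB'cardR : (B'.card : ℝ) = (B.card : ℝ) - 1 := by
        rw [hB'card]; push_cast [Nat.cast_sub (by omega : 1 ≤ B.card)]; ring
      rw [hA'cardR, hB'cardR] at hIH
      -- the top element
      have hvwAB : v + w ∈ A + B := Finset.add_mem_add hv hw
      have hvwX : v + w ∈ X := by
        refine Finset.mem_sdiff.mpr ⟨hvwAB, ?_⟩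
        intro hcon
        obtain ⟨a, ha, b, hb, hab⟩ := Finset.mem_add.mp hcon
        have hav := Finset.mem_erase.mp ha
        have hbw := Finset.mem_erase.mp hb
        have h1 := hvmax a hav.2 hav.1
        have h2 := hwmax b hbw.2 hbw.1
        have : φ (a + b) < φ (v + w) := by rw [map_add, map_add]; linarith
        rw [hab] at this
        exact lt_irrefl _ this
      by_cases hDeq : d ≤ D
      · -- no dimension drop : use the key lemma
        have hDd' : D = d := le_antisymm hDd hDeq
        have hXge : d + 1 ≤ X.card := by
          have h1 := lemmaX A B φ v w hv hw hvmax hwmax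
          have h2 : vectorSpan ℝ (A : Set V) ⊔ vectorSpan ℝ (B : Set V)
              ≤ vectorSpan ℝ ((A + B : Finset V) : Set V) :=
            sup_le (vectorSpan_le_add_left A B hB) (vectorSpan_le_add_right A B hA)
          have h3 : d ≤ Module.finrank ℝ (vectorSpan ℝ ((A + B : Finset V) : Set V)) :=
            Submodule.finrank_mono h2
          rw [← hX] at h1
          omega
        rw [hDd'] at hIH
        have hXgeR : (d : ℝ) + 1 ≤ (X.card : ℝ) := by exact_mod_cast hXge
        rw [hcards]
        nlinarith [hIH, hXgeR]
      -- dimension drops : D < d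
      push_neg at hDeq
      have hzspanA : vectorSpan ℝ (A : Set V) ≤ Vp ⊔ span ℝ {v - a₀} := by
        refine le_trans (vectorSpan_erase_le A v a₀ ha₀) ?_
        exact sup_le_sup le_sup_left le_rfl
      have hzspanB : vectorSpan ℝ (B : Set V) ≤ Vp ⊔ span ℝ {w - b₀} := by
        refine le_trans (vectorSpan_erase_le B w b₀ hb₀) ?_
        exact sup_le_sup le_sup_right le_rfl
      by_cases hzA : v - a₀ ∈ Vp
      · -- then w - b₀ ∉ Vp, and dimension drops by exactly 1; A-side is flat
        have hvsA : vectorSpan ℝ (A : Set V) ≤ Vp := by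
          refine le_trans hzspanA ?_
          rw [sup_le_iff]
          exact ⟨le_rfl, (span_le).mpr (by simpa using hzA)⟩
        have hzB : w - b₀ ∉ Vp := by
          intro hzB
          have hvsB : vectorSpan ℝ (B : Set V) ≤ Vp := by
            refine le_trans hzspanB ?_
            rw [sup_le_iff]
            exact ⟨le_rfl, (span_le).mpr (by simpa using hzB)⟩
          have : d ≤ D := Submodule.finrank_mono (sup_le hvsA hvsB)
          omega
      -- d = D + 1
        have hd1 : d = D + 1 := by
          have h1 : vectorSpan ℝ (A : Set V) ⊔ vectorSpan ℝ (B : Set V)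
              ≤ Vp ⊔ span ℝ {w - b₀} :=
            sup_le (le_trans hvsA le_sup_left) hzspanB
          have h2 := Submodule.finrank_mono h1
          have h3 := finrank_sup_span_singleton_le Vp (w - b₀)
          omega
        -- the whole slab A + {w} is new, plus one more point
        have hwnotin : ∀ b' ∈ B', w - b' ∉ Vp := by
          intro b' hb' hcon
          apply hzB
          have h1 : w - b₀ = (w - b') + (b' - b₀) := by abel
          rw [h1]
          refine add_mem hcon (le_sup_right (α := Submodule ℝ V) ?_)
          have := vsub_mem_vectorSpan ℝ (Finset.mem_coe.mpr hb') (Finset.mem_coe.mpr hb₀)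
          rwa [vsub_eq_sub] at this
        have hvsA' : ∀ x ∈ A, ∀ y ∈ A, x - y ∈ Vp := by
          intro x hx y hy
          apply hvsA
          have := vsub_mem_vectorSpan ℝ (Finset.mem_coe.mpr hx) (Finset.mem_coe.mpr hy)
          rwa [vsub_eq_sub] at this
        have hP2X : A + {w} ⊆ X := by
          intro x hx
          obtain ⟨a, ha, b, hb, hab⟩ := Finset.mem_add.mp hx
          rw [Finset.mem_singleton] at hb
          rw [hb] at hab
          subst hab
          refine Finset.mem_sdiff.mpr ⟨Finset.add_mem_add ha hw, ?_⟩
          intro hcon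
          obtain ⟨a', ha', b', hb', hab'⟩ := Finset.mem_add.mp hcon
          have hwb' : w - b' = a' - a := by
            rw [sub_eq_sub_iff_add_eq_add]
            rw [hab']
            abel
          apply hwnotin b' hb'
          rw [hwb']
          exact hvsA' a' (Finset.mem_of_mem_erase ha') a ha
        obtain ⟨wh, hwhB', hwhle⟩ := Finset.exists_max_image B' φ ⟨b₀, hb₀⟩
        have hwhB : wh ∈ B := Finset.mem_of_mem_erase hwhB'
        have hvwhX : v + wh ∈ X := by
          refine Finset.mem_sdiff.mpr ⟨Finset.add_mem_add hv hwhB, ?_⟩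
          intro hcon
          obtain ⟨a', ha', b', hb', hab'⟩ := Finset.mem_add.mp hcon
          have h1 : φ a' < φ v := hvmax a' (Finset.mem_of_mem_erase ha') (Finset.mem_erase.mp ha').1
          have h2 : φ b' ≤ φ wh := hwhle b' hb'
          have : φ (a' + b') < φ (v + wh) := by rw [map_add, map_add]; linarith
          rw [hab'] at this
          exact lt_irrefl _ this
        have hvwhP2 : v + wh ∉ A + {w} := by
          intro hcon
          obtain ⟨a, ha, b, hb, hab⟩ := Finset.mem_add.mp hcon
          rw [Finset.mem_singleton] at hb
          rw [hb] at hab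
          have hwwh : w - wh = v - a := by
            rw [sub_eq_sub_iff_add_eq_add]
            rw [← hab]
            abel
          apply hwnotin wh hwhB'
          rw [hwwh]
          exact hvsA' v hv a ha
        have hcount : (A.card : ℝ) + 1 ≤ (X.card : ℝ) := by
          have hins : insert (v + wh) (A + {w}) ⊆ X := by
            intro x hx
            rcases Finset.mem_insert.mp hx with rfl | hx
            · exact hvwhX
            · exact hP2X hx
          have hcard2 : (insert (v + wh) (A + {w})).card = A.card + 1 := by
            rw [Finset.card_insert_of_notMem hvwhP2, card_add_singleton]
          have := Finset.card_le_card hins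
          rw [hcard2] at this
          exact_mod_cast this
        rw [hcards]
        have hdR : (d : ℝ) = (D : ℝ) + 1 := by exact_mod_cast hd1
        have hmn : (B.card : ℝ) ≤ (A.card : ℝ) + 1 := by exact_mod_cast hle
        nlinarith [hIH, hcount, hdR, hmn]
      · -- v sticks out : v - a₀ ∉ Vp
        have hvnotin : ∀ a' ∈ A', v - a' ∉ Vp := by
          intro a' ha' hcon
          apply hzA
          have h1 : v - a₀ = (v - a') + (a' - a₀) := by abel
          rw [h1]
          refine add_mem hcon (le_sup_left (α := Submodule ℝ V) ?_)
          have := vsub_mem_vectorSpan ℝ (Finset.mem_coe.mpr ha') (Finset.mem_coe.mpr ha₀)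
          rwa [vsub_eq_sub] at this
        have hP1X : {v} + B' ⊆ X := by
          intro x hx
          obtain ⟨b0, hb0, b, hb, hab⟩ := Finset.mem_add.mp hx
          rw [Finset.mem_singleton] at hb0
          rw [hb0] at hab
          subst hab
          refine Finset.mem_sdiff.mpr
            ⟨Finset.add_mem_add hv (Finset.mem_of_mem_erase hb), ?_⟩
          intro hcon
          obtain ⟨a', ha', b', hb', hab'⟩ := Finset.mem_add.mp hcon
          have hva' : v - a' = b' - b := by
            rw [sub_eq_sub_iff_add_eq_add]
            rw [← hab']
            abel
          apply hvnotin a' ha'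
          rw [hva']
          refine le_sup_right (α := Submodule ℝ V) ?_
          have := vsub_mem_vectorSpan ℝ (Finset.mem_coe.mpr hb') (Finset.mem_coe.mpr hb)
          rwa [vsub_eq_sub] at this
        have hvwP1 : v + w ∉ {v} + B' := by
          intro hcon
          obtain ⟨b0, hb0, b, hb, hab⟩ := Finset.mem_add.mp hcon
          rw [Finset.mem_singleton] at hb0
          rw [hb0] at hab
          exact (Finset.mem_erase.mp hb).1 (add_left_cancel hab)
        by_cases hd1 : d = D + 1
        · -- count : m new elements
          have hcount : (B.card : ℝ) ≤ (X.card : ℝ) := by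
            have hins : insert (v + w) ({v} + B') ⊆ X := by
              intro x hx
              rcases Finset.mem_insert.mp hx with rfl | hx
              · exact hvwX
              · exact hP1X hx
            have hcard2 : (insert (v + w) ({v} + B')).card = B.card := by
              rw [Finset.card_insert_of_notMem hvwP1, card_singleton_add, hB'card]
              omega
            have := Finset.card_le_card hins
            rw [hcard2] at this
            exact_mod_cast this
          rw [hcards]
          have hdR : (d : ℝ) = (D : ℝ) + 1 := by exact_mod_cast hd1
          nlinarith [hIH, hcount, hdR]
        · -- d = D + 2 : both sides stick out
          have hd2 : d ≤ D + 2 := by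
            have h1 : vectorSpan ℝ (A : Set V) ⊔ vectorSpan ℝ (B : Set V)
                ≤ (Vp ⊔ span ℝ {v - a₀}) ⊔ span ℝ {w - b₀} := by
              refine sup_le (le_trans hzspanA le_sup_left) (le_trans hzspanB ?_)
              exact sup_le_sup le_sup_left le_rfl
            have h2 := Submodule.finrank_mono h1
            have h3 := finrank_sup_span_singleton_le (Vp ⊔ span ℝ {v - a₀}) (w - b₀)
            have h4 := finrank_sup_span_singleton_le Vp (v - a₀)
            omega
          have hd2' : d = D + 2 := by omega
          have hzB : w - b₀ ∉ Vp := by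
            intro hzB
            have hvsB : vectorSpan ℝ (B : Set V) ≤ Vp := by
              refine le_trans hzspanB ?_
              rw [sup_le_iff]
              exact ⟨le_rfl, (span_le).mpr (by simpa using hzB)⟩
            have h1 : vectorSpan ℝ (A : Set V) ⊔ vectorSpan ℝ (B : Set V)
                ≤ Vp ⊔ span ℝ {v - a₀} :=
              sup_le hzspanA (le_trans hvsB le_sup_left)
            have h2 := Submodule.finrank_mono h1
            have h3 := finrank_sup_span_singleton_le Vp (v - a₀)
            omega
          have hwnotin : ∀ b' ∈ B', w - b' ∉ Vp := by
            intro b' hb' hcon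
            apply hzB
            have h1 : w - b₀ = (w - b') + (b' - b₀) := by abel
            rw [h1]
            refine add_mem hcon (le_sup_right (α := Submodule ℝ V) ?_)
            have := vsub_mem_vectorSpan ℝ (Finset.mem_coe.mpr hb') (Finset.mem_coe.mpr hb₀)
            rwa [vsub_eq_sub] at this
          have hP2X : A' + {w} ⊆ X := by
            intro x hx
            obtain ⟨a, ha, b, hb, hab⟩ := Finset.mem_add.mp hx
            rw [Finset.mem_singleton] at hb
            rw [hb] at hab
            subst hab
            refine Finset.mem_sdiff.mpr
              ⟨Finset.add_mem_add (Finset.mem_of_mem_erase ha) hw, ?_⟩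
            intro hcon
            obtain ⟨a', ha', b', hb', hab'⟩ := Finset.mem_add.mp hcon
            have hwb' : w - b' = a' - a := by
              rw [sub_eq_sub_iff_add_eq_add]
              rw [hab']
              abel
            apply hwnotin b' hb'
            rw [hwb']
            refine le_sup_left (α := Submodule ℝ V) ?_
            have := vsub_mem_vectorSpan (k := ℝ) (s := (A' : Set V))
              (Finset.mem_coe.mpr ha') (Finset.mem_coe.mpr ha)
            rwa [vsub_eq_sub] at this
          -- the two slabs are disjoint
          have hdisj12 : Disjoint ({v} + B') (A' + {w}) := by
            rw [Finset.disjoint_left]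
            intro x hx1 hx2
            obtain ⟨y, hy, b', hb', hab1⟩ := Finset.mem_add.mp hx1
            rw [Finset.mem_singleton] at hy
            rw [hy] at hab1
            obtain ⟨a', ha', z, hz, hab2⟩ := Finset.mem_add.mp hx2
            rw [Finset.mem_singleton] at hz
            rw [hz] at hab2
            -- v + b' = a' + w
            have heq : v + b' = a' + w := hab1.trans hab2.symm
            have hz1 : v - a' = w - b' := by
              rw [sub_eq_sub_iff_add_eq_add, heq]
              abel
            -- derive d ≤ D + 1, contradiction
            have hspA : span ℝ ({v - a₀} : Set V) ≤ Vp ⊔ span ℝ {v - a'} := by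
              rw [span_le]
              rintro y hy
              rw [Set.mem_singleton_iff] at hy
              subst hy
              have h1 : v - a₀ = (v - a') + (a' - a₀) := by abel
              rw [h1]
              refine add_mem (le_sup_right (α := Submodule ℝ V) (subset_span rfl)) ?_
              refine le_sup_left (α := Submodule ℝ V) (le_sup_left (α := Submodule ℝ V) ?_)
              have := vsub_mem_vectorSpan (k := ℝ) (s := (A' : Set V))
                (Finset.mem_coe.mpr ha') (Finset.mem_coe.mpr ha₀)
              rwa [vsub_eq_sub] at this
            have hspB : span ℝ ({w - b₀} : Set V) ≤ Vp ⊔ span ℝ {v - a'} := by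
              rw [span_le]
              rintro y hy
              rw [Set.mem_singleton_iff] at hy
              subst hy
              have h1 : w - b₀ = (v - a') + (b' - b₀) := by rw [hz1]; abel
              rw [h1]
              refine add_mem (le_sup_right (α := Submodule ℝ V) (subset_span rfl)) ?_
              refine le_sup_left (α := Submodule ℝ V) (le_sup_right (α := Submodule ℝ V) ?_)
              have := vsub_mem_vectorSpan (k := ℝ) (s := (B' : Set V))
                (Finset.mem_coe.mpr hb') (Finset.mem_coe.mpr hb₀)
              rwa [vsub_eq_sub] at this
            have h1 : vectorSpan ℝ (A : Set V) ⊔ vectorSpan ℝ (B : Set V)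
                ≤ Vp ⊔ span ℝ {v - a'} := by
              refine sup_le (le_trans hzspanA ?_) (le_trans hzspanB ?_)
              · exact sup_le le_sup_left hspA
              · exact sup_le le_sup_left hspB
            have h2 := Submodule.finrank_mono h1
            have h3 := finrank_sup_span_singleton_le Vp (v - a')
            omega
          have hvwP1 : v + w ∉ {v} + B' := by
            intro hcon
            obtain ⟨y, hy, b, hb, hab⟩ := Finset.mem_add.mp hcon
            rw [Finset.mem_singleton] at hy
            rw [hy] at hab
            exact (Finset.mem_erase.mp hb).1 (add_left_cancel hab)
          have hvwP2 : v + w ∉ A' + {w} := by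
            intro hcon
            obtain ⟨a, ha, z, hz, hab⟩ := Finset.mem_add.mp hcon
            rw [Finset.mem_singleton] at hz
            rw [hz] at hab
            exact (Finset.mem_erase.mp ha).1 (add_right_cancel hab)
          have hcount : (A.card : ℝ) + (B.card : ℝ) - 1 ≤ (X.card : ℝ) := by
            have hins : insert (v + w) (({v} + B') ∪ (A' + {w})) ⊆ X := by
              intro x hx
              rcases Finset.mem_insert.mp hx with rfl | hx
              · exact hvwX
              · rcases Finset.mem_union.mp hx with hx | hx
                · exact hP1X hx
                · exact hP2X hx
            have hninsert : v + w ∉ ({v} + B') ∪ (A' + {w}) := by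
              intro hcon
              rcases Finset.mem_union.mp hcon with h | h
              · exact hvwP1 h
              · exact hvwP2 h
            have hcard2 : (insert (v + w) (({v} + B') ∪ (A' + {w}))).card
                = 1 + (B.card - 1) + (A.card - 1) := by
              rw [Finset.card_insert_of_notMem hninsert,
                Finset.card_union_of_disjoint hdisj12, card_singleton_add,
                card_add_singleton, hA'card, hB'card]
              omega
            have hle2 := Finset.card_le_card hins
            rw [hcard2] at hle2
            have : ((1 + (B.card - 1) + (A.card - 1) : ℕ) : ℝ)
                = (A.card : ℝ) + (B.card : ℝ) - 1 := by
              push_cast [Nat.cast_sub (by omega : 1 ≤ A.card),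
                Nat.cast_sub (by omega : 1 ≤ B.card)]
              ring
            calc (A.card : ℝ) + (B.card : ℝ) - 1 = _ := this.symm
              _ ≤ (X.card : ℝ) := by exact_mod_cast hle2
          rw [hcards]
          have hdR : (d : ℝ) = (D : ℝ) + 2 := by exact_mod_cast hd2'
          have hmn : (B.card : ℝ) ≤ (A.card : ℝ) + 1 := by exact_mod_cast hle
          nlinarith [hIH, hcount, hdR, hmn]

/-- Ruzsa's `d`-dimensional sumset bound: if `A, B ⊆ ℝ^d` are finite nonempty
with `|A| ≥ |B|` and `A + B` has affine dimension `d` (its affine span is all of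
`ℝ^d`), then `|A + B| ≥ |A| + d|B| − d(d+1)/2`. -/
theorem stmt9 (d : ℕ) (A B : Finset (Fin d → ℝ)) (hA : A.Nonempty) (hB : B.Nonempty)
    (hcard : B.card ≤ A.card)
    (hdim : affineSpan ℝ ((A + B : Finset (Fin d → ℝ)) : Set (Fin d → ℝ)) = ⊤) :
    (A.card : ℝ) + d * B.card - d * (d + 1) / 2 ≤ ((A + B).card : ℝ) := by
  classical
  have hW : vectorSpan ℝ ((A + B : Finset (Fin d → ℝ)) : Set (Fin d → ℝ)) = ⊤ := by
    rw [← direction_affineSpan, hdim]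
    exact AffineSubspace.direction_top ℝ _ _
  have htop : vectorSpan ℝ (A : Set (Fin d → ℝ)) ⊔ vectorSpan ℝ (B : Set (Fin d → ℝ)) = ⊤ := by
    apply le_antisymm le_top
    rw [← hW]
    exact vectorSpan_add_le A B
  have hrank : Module.finrank ℝ
      ↥(vectorSpan ℝ (A : Set (Fin d → ℝ)) ⊔ vectorSpan ℝ (B : Set (Fin d → ℝ))) = d := by
    rw [htop, finrank_top]
    simp
  have h := ruzsa_key (A.card + B.card) A B hA hB le_rfl (by omega)
  rw [hrank] at h
  exact h
end

section
/- Let A' ⊆ ℝ^d be a finite nonempty set contained in r−1 parallel lines l₁,…,l_{r−1} (each containing at least one point of A'), and let p ⊆ ℝ^d be a finite set contained in a line l_r parallel to these, with |p| > |A'| and r ≥ d + 1 ≥ 2. Let q, s be nonzero integers. If the 2(r−1) lines s·l_i + q·l_r and q·l_i + s·l_r (1 ≤ i ≤ r−1) are pairwise distinct, then |s·A' + q·p| + |q·A' + s·p| ≥ 2|A'| + (2d−2)|p| − 2d. -/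
open Pointwise

/-- Two parallel lines sharing a point are equal. -/
lemma line_eq_of_shared {d : ℕ} (v c₁ c₂ : Fin d → ℝ) (t₁ t₂ : ℝ)
    (h : c₁ + t₁ • v = c₂ + t₂ • v) :
    {x : Fin d → ℝ | ∃ t : ℝ, x = c₁ + t • v} =
    {x : Fin d → ℝ | ∃ t : ℝ, x = c₂ + t • v} := by
  have hc : c₂ = c₁ + (t₁ - t₂) • v := by
    have h2 : c₂ = c₁ + t₁ • v - t₂ • v := by rw [h]; abel
    rw [h2]; module
  ext w
  constructor
  · rintro ⟨u, rfl⟩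
    exact ⟨u - (t₁ - t₂), by rw [hc]; module⟩
  · rintro ⟨u, rfl⟩
    exact ⟨u + (t₁ - t₂), by rw [hc]; module⟩

lemma key_lb {d : ℕ} (m : ℕ) (v : Fin d → ℝ)
    (a : Fin m → (Fin d → ℝ)) (b : Fin d → ℝ)
    (A' p : Finset (Fin d → ℝ))
    (hmeet : ∀ i : Fin m, ∃ x ∈ A', ∃ t : ℝ, x = a i + t • v)
    (hp : ∀ x ∈ p, ∃ t : ℝ, x = b + t • v)
    (c' c : ℝ) (hc : c ≠ 0)
    (hl : ∀ i j : Fin m,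
      {x : Fin d → ℝ | ∃ t : ℝ, x = c' • a i + c • b + t • v} =
      {x : Fin d → ℝ | ∃ t : ℝ, x = c' • a j + c • b + t • v} → i = j) :
    m * p.card ≤ ((A'.image fun x => c' • x) + (p.image fun x => c • x)).card := by
  choose x hx t ht using hmeet
  set T : Fin m → Finset (Fin d → ℝ) := fun i => p.image fun y => c' • x i + c • y with hT
  have hline : ∀ i : Fin m, ∀ z ∈ T i, ∃ u : ℝ, z = c' • a i + c • b + u • v := by
    intro i z hz
    obtain ⟨y, hy, rfl⟩ := Finset.mem_image.mp hz
    obtain ⟨u, rfl⟩ := hp y hy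
    refine ⟨c' * t i + c * u, ?_⟩
    rw [ht i]
    module
  have hsub : Finset.univ.biUnion T ⊆
      (A'.image fun z => c' • z) + (p.image fun z => c • z) := by
    intro z hz
    obtain ⟨i, -, hz⟩ := Finset.mem_biUnion.mp hz
    obtain ⟨y, hy, rfl⟩ := Finset.mem_image.mp hz
    exact Finset.add_mem_add (Finset.mem_image_of_mem _ (hx i))
      (Finset.mem_image_of_mem _ hy)
  have hdisj : ∀ i ∈ (Finset.univ : Finset (Fin m)), ∀ j ∈ Finset.univ,
      i ≠ j → Disjoint (T i) (T j) := by
    intro i _ j _ hij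
    rw [Finset.disjoint_left]
    intro z hzi hzj
    obtain ⟨u₁, h₁⟩ := hline i z hzi
    obtain ⟨u₂, h₂⟩ := hline j z hzj
    exact hij (hl i j (line_eq_of_shared v _ _ u₁ u₂ (by rw [← h₁, ← h₂])))
  have hcardT : ∀ i : Fin m, (T i).card = p.card := by
    intro i
    apply Finset.card_image_of_injective
    intro y₁ y₂ h
    have h2 : c • y₁ = c • y₂ := by
      have := h
      exact add_left_cancel this
    exact smul_right_injective (Fin d → ℝ) hc h2
  calc m * p.card = ∑ i : Fin m, (T i).card := by
        simp [hcardT, Finset.sum_const, Finset.card_univ]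
    _ = (Finset.univ.biUnion T).card := (Finset.card_biUnion hdisj).symm
    _ ≤ _ := Finset.card_le_card hsub


/-- Key claim (cl), second case of Proposition 4.1: let `A' ⊆ ℝ^d` be finite
nonempty, covered by `r − 1` parallel lines (direction `v ≠ 0`, base points
`a i`), each containing a point of `A'`, and let `p` be a finite set contained
in a parallel line through `b`, with `|p| > |A'|` and `r ≥ d + 1 ≥ 2`. Let
`q, s` be nonzero integers. If the `2(r−1)` lines `s·lᵢ + q·l_r` and
`q·lᵢ + s·l_r` (which are the lines with direction `v` through
`s•(a i) + q•b` resp. `q•(a i) + s•b`) are pairwise distinct, then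
`|s·A' + q·p| + |q·A' + s·p| ≥ 2|A'| + (2d−2)|p| − 2d`. -/
theorem stmt10 (d r : ℕ) (hd : 1 ≤ d) (hr : d + 1 ≤ r)
    (v : Fin d → ℝ) (hv : v ≠ 0)
    (a : Fin (r - 1) → (Fin d → ℝ)) (b : Fin d → ℝ)
    (A' p : Finset (Fin d → ℝ)) (hA' : A'.Nonempty)
    (hcov : ∀ x ∈ A', ∃ (i : Fin (r - 1)) (t : ℝ), x = a i + t • v)
    (hmeet : ∀ i : Fin (r - 1), ∃ x ∈ A', ∃ t : ℝ, x = a i + t • v)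
    (hp : ∀ x ∈ p, ∃ t : ℝ, x = b + t • v)
    (hsize : A'.card < p.card)
    (q s : ℤ) (hq : q ≠ 0) (hs : s ≠ 0)
    (hlines : Function.Injective fun j : Fin (r - 1) ⊕ Fin (r - 1) =>
      Sum.elim
        (fun i => {x : Fin d → ℝ | ∃ t : ℝ, x = (s : ℝ) • a i + (q : ℝ) • b + t • v})
        (fun i => {x : Fin d → ℝ | ∃ t : ℝ, x = (q : ℝ) • a i + (s : ℝ) • b + t • v}) j) :
    2 * (A'.card : ℝ) + (2 * d - 2) * p.card - 2 * d ≤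
      (((A'.image fun x => (s : ℝ) • x) + (p.image fun x => (q : ℝ) • x)).card : ℝ) +
      (((A'.image fun x => (q : ℝ) • x) + (p.image fun x => (s : ℝ) • x)).card : ℝ) := by
  have hq' : (q : ℝ) ≠ 0 := Int.cast_ne_zero.mpr hq
  have hs' : (s : ℝ) ≠ 0 := Int.cast_ne_zero.mpr hs
  have h1 := key_lb (r - 1) v a b A' p hmeet hp (s : ℝ) (q : ℝ) hq'
    (fun i j h => by
      have := hlines (a₁ := Sum.inl i) (a₂ := Sum.inl j) (by simpa using h)
      simpa using this)
  have h2 := key_lb (r - 1) v a b A' p hmeet hp (q : ℝ) (s : ℝ) hs'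
    (fun i j h => by
      have := hlines (a₁ := Sum.inr i) (a₂ := Sum.inr j) (by simpa using h)
      simpa using this)
  have hm : (d : ℝ) ≤ ((r - 1 : ℕ) : ℝ) := by
    exact_mod_cast Nat.le_sub_one_of_lt hr
  have h1' : ((r - 1 : ℕ) : ℝ) * p.card ≤
      (((A'.image fun x => (s : ℝ) • x) + (p.image fun x => (q : ℝ) • x)).card : ℝ) := by
    exact_mod_cast h1
  have h2' : ((r - 1 : ℕ) : ℝ) * p.card ≤
      (((A'.image fun x => (q : ℝ) • x) + (p.image fun x => (s : ℝ) • x)).card : ℝ) := by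
    exact_mod_cast h2
  have hAp : (A'.card : ℝ) + 1 ≤ p.card := by exact_mod_cast hsize
  have hP0 : (0 : ℝ) ≤ p.card := by positivity
  have hD0 : (1 : ℝ) ≤ d := by exact_mod_cast hd
  have key : (d : ℝ) * p.card ≤ ((r - 1 : ℕ) : ℝ) * p.card :=
    mul_le_mul_of_nonneg_right hm hP0
  nlinarith [h1', h2', key, hAp, hP0, hD0]
end

section
/- Let A be a finite subset of ℝ² covered by r₁ parallel lines in direction u, each containing at least one point of A, and let L ∈ GL(2,ℝ) have no real eigenvalues. If L(A) is covered by r₂ lines in direction u (each meeting L(A)), then r₁·r₂ ≥ |A|. -/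
open Pointwise

/-- Counting step in the proof of Theorem 5.2: let `A ⊆ ℝ²` be finite, covered
by `r₁` parallel lines in direction `u` (base points `a i`), each containing a
point of `A`, and let `L ∈ GL(2, ℝ)` have no real eigenvalues. If `L(A)` is
covered by `r₂` lines in direction `u` (base points `b j`), each meeting
`L(A)`, then `r₁ · r₂ ≥ |A|`. -/
theorem stmt12 (L : (Fin 2 → ℝ) →ₗ[ℝ] (Fin 2 → ℝ)) (hL : Function.Bijective L)
    (heig : ∀ (c : ℝ) (x : Fin 2 → ℝ), x ≠ 0 → L x ≠ c • x)
    (A : Finset (Fin 2 → ℝ)) (u : Fin 2 → ℝ) (hu : u ≠ 0)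
    (r₁ r₂ : ℕ) (a : Fin r₁ → (Fin 2 → ℝ)) (b : Fin r₂ → (Fin 2 → ℝ))
    (hcovA : ∀ x ∈ A, ∃ (i : Fin r₁) (t : ℝ), x = a i + t • u)
    (hmeetA : ∀ i : Fin r₁, ∃ x ∈ A, ∃ t : ℝ, x = a i + t • u)
    (hcovLA : ∀ y ∈ A.image L, ∃ (j : Fin r₂) (t : ℝ), y = b j + t • u)
    (hmeetLA : ∀ j : Fin r₂, ∃ y ∈ A.image L, ∃ t : ℝ, y = b j + t • u) :
    A.card ≤ r₁ * r₂ := by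
  classical
  choose i ti hti using hcovA
  choose j tj htj using fun x (hx : x ∈ A) => hcovLA (L x) (Finset.mem_image_of_mem L hx)
  set F : ↥A → Fin r₁ × Fin r₂ := fun x => (i x x.2, j x x.2) with hF
  have hinj : Function.Injective F := by
    rintro ⟨x, hx⟩ ⟨x', hx'⟩ h
    have h1 : i x hx = i x' hx' := congrArg Prod.fst h
    have h2 : j x hx = j x' hx' := congrArg Prod.snd h
    ext1
    by_contra hne
    have hp1 := hti x hx
    rw [h1] at hp1
    have hp2 := hti x' hx'
    have hq1 := htj x hx
    rw [h2] at hq1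
    have hq2 := htj x' hx'
    set s := ti x hx with hsdef
    set s' := ti x' hx' with hs'def
    set σ := tj x hx with hσdef
    set σ' := tj x' hx' with hσ'def
    have hxx' : x - x' = (s - s') • u :=
      (congrArg₂ (· - ·) hp1 hp2).trans (by rw [sub_smul]; abel)
    have hLxx' : L (x - x') = (σ - σ') • u := by
      rw [map_sub]
      exact (congrArg₂ (· - ·) hq1 hq2).trans (by rw [sub_smul]; abel)
    have htne : s - s' ≠ 0 := by
      intro h0
      apply hne
      have hz : x - x' = 0 := by rw [hxx', h0, zero_smul]
      simpa using sub_eq_zero.mp hz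
    have : L u = ((σ - σ') / (s - s')) • u := by
      have h3 := hLxx'
      rw [hxx', map_smul] at h3
      apply smul_right_injective (Fin 2 → ℝ) htne
      show (s - s') • L u = (s - s') • (((σ - σ') / (s - s')) • u)
      rw [smul_smul, show (s - s') * ((σ - σ') / (s - s')) = σ - σ' from by field_simp]
      exact h3
    exact heig _ u hu this
  calc A.card = Fintype.card ↥A := (Fintype.card_coe A).symm
    _ ≤ Fintype.card (Fin r₁ × Fin r₂) := Fintype.card_le_of_injective F hinj
    _ = r₁ * r₂ := by simp
end

section
/- Let G be an abelian group and U, V finite nonempty subsets of G. Then |U + V| ≤ |U − V|³ / (|U|·|V|). -/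
open Pointwise Finset

/-- For finite nonempty subsets `U, V` of an abelian group `G`,
`|U + V| ≤ |U − V|³ / (|U| · |V|)`. -/
theorem stmt17 {G : Type*} [AddCommGroup G] [DecidableEq G]
    (U V : Finset G) (hU : U.Nonempty) (hV : V.Nonempty) :
    ((U + V).card : ℝ) ≤ ((U - V).card : ℝ) ^ 3 / (U.card * V.card) := by
  have hneg : -(V - U) = U - V := by
    ext x
    simp only [Finset.mem_neg, Finset.mem_sub]
    constructor
    · rintro ⟨y, ⟨v, hv, u, hu, rfl⟩, rfl⟩
      exact ⟨u, hu, v, hv, by abel⟩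
    · rintro ⟨u, hu, v, hv, rfl⟩
      exact ⟨v - u, ⟨v, hv, u, hu, rfl⟩, by abel⟩
  have hcomm : (V - U).card = (U - V).card := by
    rw [← hneg, Finset.card_neg]
  -- Ruzsa triangle (sum version): #(U+V) * #(-U) ≤ #(U + -U) * #(-U + V)
  have h1 : (U + V).card * U.card ≤ (U - U).card * (V - U).card := by
    have := Finset.ruzsa_triangle_inequality_add_add_add U (-U) V
    simpa [sub_eq_add_neg, add_comm] using this
  -- Ruzsa triangle: #(U - U) * #V ≤ #(U - V) * #(U - V)
  have h2 : (U - U).card * V.card ≤ (U - V).card * (U - V).card :=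
    Finset.ruzsa_triangle_inequality_sub_sub_sub U V U
  have key : (U + V).card * U.card * V.card ≤ (U - V).card ^ 3 := by
    calc (U + V).card * U.card * V.card
        ≤ (U - U).card * (V - U).card * V.card := by
          exact Nat.mul_le_mul_right _ h1
      _ = (U - U).card * V.card * (V - U).card := by ring
      _ ≤ (U - V).card * (U - V).card * (V - U).card := Nat.mul_le_mul_right _ h2
      _ = (U - V).card ^ 3 := by rw [hcomm]; ring
  rw [le_div_iff₀ (by positivity)]
  calc ((U + V).card : ℝ) * (U.card * V.card) = ((U + V).card * U.card * V.card : ℕ) := by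
        push_cast; ring
    _ ≤ ((U - V).card ^ 3 : ℕ) := by exact_mod_cast key
    _ = ((U - V).card : ℝ) ^ 3 := by push_cast; ring
end

section
/- Let A ⊆ ℝ^d be finite with |A+A| ≤ c⁶|A| for some c > 0 and |A| = n sufficiently large. Suppose A is covered by parallel lines l₁,…,l_k with p_i = A ∩ l_i satisfying |p₁| ≥ … ≥ |p_k| and |p₁| ≥ C₁⁻¹ n^{1/s}. Let r be maximal with |p_r| ≥ |p₁|^{1/2} and set B = A \ (l₁ ∪ … ∪ l_r). Then |B| < |p₁|^{−1/2}|A + A| ≤ C₁^{1/2} c⁶ n^{1 − 1/(2s)}. -/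
open Pointwise

/-- Final counting step of Lemma 3.2: let `c, C₁ > 0` and `s ≥ 1`. For all
sufficiently large `n = |A|` the following holds. Suppose `A ⊆ ℝ^d` is finite
with `|A + A| ≤ c⁶|A|`, and `A` is covered by distinct parallel lines
`l₁, …, l_k` (direction `v ≠ 0`, base points `a i`), with `pᵢ = A ∩ lᵢ`
satisfying `|p₁| ≥ … ≥ |p_k|` and `|p₁| ≥ C₁⁻¹ n^{1/s}`. Let `r` be maximal
with `|p_r| ≥ |p₁|^{1/2}` and set `B = A \ (l₁ ∪ … ∪ l_r)`. Then
`|B| < |p₁|^{−1/2}|A + A| ≤ C₁^{1/2} c⁶ n^{1 − 1/(2s)}`. -/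
theorem stmt18 (c C₁ : ℝ) (hc : 0 < c) (hC₁ : 0 < C₁) (s : ℕ) (hs : 1 ≤ s) :
    ∃ N : ℕ, ∀ (d k r : ℕ) (hk : 0 < k),
      ∀ (A B : Finset (Fin d → ℝ)) (v : Fin d → ℝ), v ≠ 0 →
      ∀ (a : Fin k → (Fin d → ℝ)) (p : Fin k → Finset (Fin d → ℝ)),
      N ≤ A.card →
      ((A + A).card : ℝ) ≤ c ^ 6 * A.card →
      (Function.Injective fun i : Fin k =>
        {x : Fin d → ℝ | ∃ t : ℝ, x = a i + t • v}) →
      (∀ x ∈ A, ∃ (i : Fin k) (t : ℝ), x = a i + t • v) →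
      (∀ (i : Fin k) (x : Fin d → ℝ),
        x ∈ p i ↔ x ∈ A ∧ ∃ t : ℝ, x = a i + t • v) →
      (∀ i j : Fin k, i ≤ j → (p j).card ≤ (p i).card) →
      C₁⁻¹ * (A.card : ℝ) ^ ((1 : ℝ) / s) ≤ ((p ⟨0, hk⟩).card : ℝ) →
      r ≤ k →
      (∀ i : Fin k, (i : ℕ) < r →
        ((p ⟨0, hk⟩).card : ℝ) ^ ((1 : ℝ) / 2) ≤ ((p i).card : ℝ)) →
      (∀ i : Fin k, r ≤ (i : ℕ) →
        ((p i).card : ℝ) < ((p ⟨0, hk⟩).card : ℝ) ^ ((1 : ℝ) / 2)) →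
      (∀ x : Fin d → ℝ, x ∈ B ↔ x ∈ A ∧ ∀ i : Fin k, (i : ℕ) < r → x ∉ p i) →
      (B.card : ℝ) < ((p ⟨0, hk⟩).card : ℝ) ^ (-(1 : ℝ) / 2) * ((A + A).card : ℝ) ∧
      ((p ⟨0, hk⟩).card : ℝ) ^ (-(1 : ℝ) / 2) * ((A + A).card : ℝ) ≤
        C₁ ^ ((1 : ℝ) / 2) * c ^ 6 * (A.card : ℝ) ^ (1 - 1 / (2 * (s : ℝ))) := by
  classical
  refine ⟨1, ?_⟩
  intro d k r hk A B v hv a p hN hAA hinj hcov hp hmono hP1 hrk hbig hsmall hB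
  set i0 : Fin k := ⟨0, hk⟩
  set n : ℝ := (A.card : ℝ) with hn
  have hn1 : (1 : ℝ) ≤ n := by rw [hn]; exact_mod_cast hN
  have hn0 : (0 : ℝ) < n := lt_of_lt_of_le one_pos hn1
  have hM0 : (0 : ℝ) < C₁⁻¹ * n ^ ((1 : ℝ) / s) :=
    mul_pos (inv_pos.2 hC₁) (Real.rpow_pos_of_pos hn0 _)
  set Pc : ℝ := ((p i0).card : ℝ) with hPc
  have hPc0 : 0 < Pc := lt_of_lt_of_le hM0 hP1
  set Q : ℝ := Pc ^ ((1 : ℝ) / 2) with hQ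
  have hQ0 : 0 < Q := Real.rpow_pos_of_pos hPc0 _
  have hQQ : Q * Q = Pc := by
    rw [hQ, ← Real.rpow_add hPc0]; norm_num
  -- two points on lines i and j force the lines to coincide
  have hline : ∀ (i j : Fin k) (t t' : ℝ), a i + t • v = a j + t' • v → i = j := by
    intro i j t t' h
    apply hinj
    ext x
    simp only [Set.mem_setOf_eq]
    constructor
    · rintro ⟨u, rfl⟩
      exact ⟨t' - t + u, by linear_combination (norm := module) h⟩
    · rintro ⟨u, rfl⟩
      exact ⟨t - t' + u, by linear_combination (norm := module) -h⟩
  -- the pieces p i are pairwise disjoint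
  have hpdisj : ∀ i j : Fin k, i ≠ j → Disjoint (p i) (p j) := by
    intro i j hij
    rw [Finset.disjoint_left]
    intro x hxi hxj
    obtain ⟨-, t, rfl⟩ := (hp i x).1 hxi
    obtain ⟨-, t', h⟩ := (hp j _).1 hxj
    exact hij (hline i j t t' h)
  -- the sumsets p₁ + p i are pairwise disjoint
  have hsumdisj : ∀ i j : Fin k, i ≠ j →
      Disjoint (p i0 + p i) (p i0 + p j) := by
    intro i j hij
    rw [Finset.disjoint_left]
    intro z hzi hzj
    obtain ⟨y1, hy1, w1, hw1, rfl⟩ := Finset.mem_add.1 hzi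
    obtain ⟨y2, hy2, w2, hw2, he⟩ := Finset.mem_add.1 hzj
    obtain ⟨-, t1, rfl⟩ := (hp i0 y1).1 hy1
    obtain ⟨-, u1, rfl⟩ := (hp i w1).1 hw1
    obtain ⟨-, t2, rfl⟩ := (hp i0 y2).1 hy2
    obtain ⟨-, u2, rfl⟩ := (hp j w2).1 hw2
    exact hij (hline i j (t1 + u1 - t2) u2
      (by linear_combination (norm := module) -he))
  set S : Finset (Fin k) := Finset.univ.filter (fun j : Fin k => r ≤ (j : ℕ)) with hS
  set S' : Finset (Fin k) := S.filter (fun j => (p j).Nonempty) with hS'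
  -- B is the disjoint union of the p j, j ≥ r
  have hBeq : B = S.biUnion p := by
    ext x
    simp only [Finset.mem_biUnion, hB, hS, Finset.mem_filter, Finset.mem_univ, true_and]
    constructor
    · rintro ⟨hxA, hnot⟩
      obtain ⟨i, t, rfl⟩ := hcov x hxA
      refine ⟨i, ?_, (hp i _).2 ⟨hxA, t, rfl⟩⟩
      by_contra h
      exact hnot i (Nat.lt_of_not_le h) ((hp i _).2 ⟨hxA, t, rfl⟩)
    · rintro ⟨j, hj, hxj⟩
      refine ⟨((hp j x).1 hxj).1, fun i hi hxi => ?_⟩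
      have hne : i ≠ j := fun h => absurd (h ▸ hj) (Nat.not_le.2 hi)
      exact (Finset.disjoint_left.1 (hpdisj i j hne)) hxi hxj
  have hBcard : B.card = ∑ j ∈ S', (p j).card := by
    rw [hBeq, Finset.card_biUnion (fun i _ j _ hij => hpdisj i j hij)]
    refine (Finset.sum_subset (Finset.filter_subset _ _) ?_).symm
    intro j hj hj'
    rw [Finset.mem_filter] at hj'
    simp only [Finset.card_eq_zero, ← Finset.not_nonempty_iff_eq_empty]
    exact fun h => hj' ⟨hj, h⟩
  -- union of the sumsets lies inside A + A
  have hsub : S'.biUnion (fun j => p i0 + p j) ⊆ A + A := by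
    intro z hz
    obtain ⟨j, hj, hzj⟩ := Finset.mem_biUnion.1 hz
    obtain ⟨y, hy, w, hw, rfl⟩ := Finset.mem_add.1 hzj
    exact Finset.add_mem_add ((hp i0 y).1 hy).1 ((hp j w).1 hw).1
  have hAAcard : (S'.card * (p i0).card : ℕ) ≤ (A + A).card := by
    calc S'.card * (p i0).card = ∑ _j ∈ S', (p i0).card := by
          rw [Finset.sum_const, smul_eq_mul]
      _ ≤ ∑ j ∈ S', (p i0 + p j).card :=
          Finset.sum_le_sum fun j hj =>
            Finset.card_le_card_add_right ((Finset.mem_filter.1 hj).2)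
      _ = (S'.biUnion (fun j => p i0 + p j)).card :=
          (Finset.card_biUnion (fun i _ j _ hij => hsumdisj i j hij)).symm
      _ ≤ (A + A).card := Finset.card_le_card hsub
  have hAne : A.Nonempty := Finset.card_pos.1 (lt_of_lt_of_le one_pos hN)
  have hAA0 : (0 : ℝ) < ((A + A).card : ℝ) := by
    exact_mod_cast Finset.card_pos.2 (hAne.add hAne)
  -- main strict inequality : Q * |B| < |A+A|
  have hmain : Q * (B.card : ℝ) < ((A + A).card : ℝ) := by
    rcases S'.eq_empty_or_nonempty with hE | hNE
    · rw [hBcard, hE]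
      simpa using hAA0
    · have h1 : Q * (B.card : ℝ) < (S'.card : ℝ) * Pc := by
        rw [hBcard]
        push_cast
        rw [Finset.mul_sum]
        calc ∑ j ∈ S', Q * ((p j).card : ℝ)
            < ∑ _j ∈ S', Pc := by
              refine Finset.sum_lt_sum_of_nonempty hNE fun j hj => ?_
              have hjr : r ≤ (j : ℕ) :=
                (Finset.mem_filter.1 ((Finset.mem_filter.1 hj).1)).2
              calc Q * ((p j).card : ℝ) < Q * Q :=
                    (mul_lt_mul_iff_right₀ hQ0).2 (hsmall j hjr)
                _ = Pc := hQQ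
          _ = (S'.card : ℝ) * Pc := by rw [Finset.sum_const, nsmul_eq_mul]
      refine h1.trans_le ?_
      calc (S'.card : ℝ) * Pc = ((S'.card * (p i0).card : ℕ) : ℝ) := by
            push_cast [hPc]; ring
        _ ≤ ((A + A).card : ℝ) := by exact_mod_cast hAAcard
  have hexp : Pc ^ (-(1 : ℝ) / 2) = Q⁻¹ := by
    rw [neg_div, Real.rpow_neg hPc0.le, hQ]
  constructor
  · rw [hexp, ← div_eq_inv_mul, lt_div_iff₀ hQ0, mul_comm]
    exact hmain
  · rw [hexp]
    have hQM : (C₁⁻¹ * n ^ ((1 : ℝ) / s)) ^ ((1 : ℝ) / 2) ≤ Q :=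
      Real.rpow_le_rpow hM0.le hP1 (by norm_num)
    have hM2 : (0 : ℝ) < (C₁⁻¹ * n ^ ((1 : ℝ) / s)) ^ ((1 : ℝ) / 2) :=
      Real.rpow_pos_of_pos hM0 _
    have hQinv : Q⁻¹ ≤ ((C₁⁻¹ * n ^ ((1 : ℝ) / s)) ^ ((1 : ℝ) / 2))⁻¹ :=
      inv_anti₀ hM2 hQM
    have hMval : ((C₁⁻¹ * n ^ ((1 : ℝ) / s)) ^ ((1 : ℝ) / 2))⁻¹
        = C₁ ^ ((1 : ℝ) / 2) * n ^ (-(1 / (2 * (s : ℝ)))) := by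
      rw [Real.mul_rpow (inv_nonneg.2 hC₁.le) (Real.rpow_nonneg hn0.le _),
        Real.inv_rpow hC₁.le, ← Real.rpow_mul hn0.le, mul_inv, inv_inv,
        ← Real.rpow_neg hn0.le]
      congr 1
      ring
    have hpow : n ^ (-(1 / (2 * (s : ℝ)))) * n = n ^ (1 - 1 / (2 * (s : ℝ))) := by
      rw [show (1 - 1 / (2 * (s : ℝ))) = -(1 / (2 * (s : ℝ))) + 1 by ring,
        Real.rpow_add hn0, Real.rpow_one]
    calc Q⁻¹ * ((A + A).card : ℝ)
        ≤ (C₁ ^ ((1 : ℝ) / 2) * n ^ (-(1 / (2 * (s : ℝ))))) * (c ^ 6 * n) := by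
          refine mul_le_mul (hMval ▸ hQinv) hAA hAA0.le ?_
          positivity
      _ = C₁ ^ ((1 : ℝ) / 2) * c ^ 6 * (n ^ (-(1 / (2 * (s : ℝ)))) * n) := by ring
      _ = C₁ ^ ((1 : ℝ) / 2) * c ^ 6 * n ^ (1 - 1 / (2 * (s : ℝ))) := by rw [hpow]
end
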